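/- arXiv:2011.14692 — 5 statements merged into one kernel-verified Lean document; each statement's English description precedes it below -/
import Mathlib

section
/- Let m ≥ 2 be an integer and a_1,…,a_m homogeneous ideals of the standard graded polynomial ring S = k[α_0,…,α_n]. Suppose that for all 1 ≤ i < j ≤ m there is a positive integer d_{ij} such that every homogeneous polynomial of degree d_{ij} lies in a_i + a_j. Then the saturation of the product a_1·a_2·⋯·a_m with respect to the irrelevant ideal m = (α_0,…,α_n) equals the saturation of the intersection a_1 ∩ a_2 ∩ ⋯ ∩ a_m. -/
open MvPolynomial

/-- The irrelevant ideal `(α₀, …, αₙ)` of `S = k[α₀, …, αₙ]`. -/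
noncomputable def irrel (k : Type*) [Field k] (n : ℕ) :
    Ideal (MvPolynomial (Fin (n+1)) k) := Ideal.span (Set.range X)

/-- The saturation of an ideal with respect to the irrelevant ideal:
`sat a = {f | ∃ N, 𝔪^N · f ⊆ a}`. -/
noncomputable def sat (k : Type*) [Field k] (n : ℕ)
    (a : Ideal (MvPolynomial (Fin (n+1)) k)) : Ideal (MvPolynomial (Fin (n+1)) k) :=
  ⨆ N : ℕ, Submodule.colon a (((irrel k n) ^ N : Ideal (MvPolynomial (Fin (n+1)) k)) : Set (MvPolynomial (Fin (n+1)) k))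

attribute [local instance] MvPolynomial.gradedAlgebra

/-- Condition (∗): there is a positive integer `d` such that every homogeneous
polynomial of degree `d` lies in `c`. -/
def condStar (k : Type*) [Field k] (n : ℕ) (c : Ideal (MvPolynomial (Fin (n+1)) k)) : Prop :=
  ∃ d : ℕ, 0 < d ∧ ∀ f : MvPolynomial (Fin (n+1)) k, f.IsHomogeneous d → f ∈ c

section Aux

variable {k : Type*} [Field k] {n : ℕ}

local notation "R" => MvPolynomial (Fin (n+1)) k

lemma mem_sat_iff {a : Ideal R} {f : R} :
    f ∈ sat k n a ↔ ∃ N : ℕ, ∀ g ∈ irrel k n ^ N, g * f ∈ a := by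
  have hdir : Directed (· ≤ ·) (fun N : ℕ => Submodule.colon a ((irrel k n ^ N : Ideal R) : Set R)) := by
    intro N M
    refine ⟨max N M, Submodule.colon_mono le_rfl
      (Ideal.pow_le_pow_right (le_max_left _ _)), Submodule.colon_mono le_rfl
      (Ideal.pow_le_pow_right (le_max_right _ _))⟩
  rw [sat, Submodule.mem_iSup_of_directed _ hdir]
  refine exists_congr fun N => ?_
  rw [Submodule.mem_colon]
  constructor
  · intro H g hg
    have := H g hg
    rw [smul_eq_mul] at this
    rwa [mul_comm] at this
  · intro H g hg
    rw [smul_eq_mul, mul_comm]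
    exact H g hg

lemma sat_mono {a b : Ideal R} (h : a ≤ b) : sat k n a ≤ sat k n b :=
  iSup_mono fun N => Submodule.colon_mono h le_rfl

lemma sat_inf (a b : Ideal R) : sat k n (a ⊓ b) = sat k n a ⊓ sat k n b := by
  refine le_antisymm (le_inf (sat_mono inf_le_left) (sat_mono inf_le_right)) ?_
  intro f hf
  rw [Submodule.mem_inf] at hf
  obtain ⟨hfa, hfb⟩ := hf
  rw [mem_sat_iff] at hfa hfb ⊢
  obtain ⟨N, hN⟩ := hfa
  obtain ⟨M, hM⟩ := hfb
  refine ⟨max N M, fun g hg => ⟨hN g (Ideal.pow_le_pow_right (le_max_left _ _) hg),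
    hM g (Ideal.pow_le_pow_right (le_max_right _ _) hg)⟩⟩

lemma sat_mul_eq_sat_inf {a b : Ideal R} (h : ∃ D : ℕ, irrel k n ^ D ≤ a ⊔ b) :
    sat k n (a * b) = sat k n (a ⊓ b) := by
  obtain ⟨D, hD⟩ := h
  refine le_antisymm (sat_mono Ideal.mul_le_inf) ?_
  intro f hf
  rw [mem_sat_iff] at hf ⊢
  obtain ⟨N, hN⟩ := hf
  refine ⟨D + N, fun g hg => ?_⟩
  rw [pow_add] at hg
  refine Submodule.mul_induction_on hg (fun r hr s hs => ?_)
    (fun x y hx hy => by rw [add_mul]; exact add_mem hx hy)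
  have hsf : s * f ∈ a ⊓ b := hN s hs
  obtain ⟨x, hx, y, hy, rfl⟩ := Submodule.mem_sup.1 (hD hr)
  have h1 : x * (s * f) ∈ a * b := Ideal.mul_mem_mul hx hsf.2
  have h2 : (s * f) * y ∈ a * b := Ideal.mul_mem_mul hsf.1 hy
  have : (x + y) * s * f = x * (s * f) + (s * f) * y := by ring
  rw [this]
  exact add_mem h1 h2

lemma irrel_pow_le_span_homogeneous (d : ℕ) :
    irrel k n ^ d ≤ Ideal.span {f : R | MvPolynomial.IsHomogeneous f d} := by
  induction d with
  | zero =>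
      intro x hx
      have h1 : (1 : R) ∈ Ideal.span {f : R | MvPolynomial.IsHomogeneous f 0} :=
        Ideal.subset_span (by simpa using (MvPolynomial.isHomogeneous_one (Fin (n+1)) k))
      have : Ideal.span {f : R | MvPolynomial.IsHomogeneous f 0} = ⊤ :=
        (Ideal.eq_top_iff_one _).2 h1
      rw [this]; trivial
  | succ d ih =>
      have : irrel k n ^ (d + 1) = irrel k n * irrel k n ^ d := by rw [pow_succ, mul_comm]
      rw [this]
      refine Ideal.mul_le.2 fun r hr s hs => ?_
      have hs' : s ∈ Ideal.span {f : R | MvPolynomial.IsHomogeneous f d} := ih hs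
      -- induct on r ∈ span (range X)
      refine Submodule.span_induction
        (p := fun r _ => r * s ∈ Ideal.span {f : R | MvPolynomial.IsHomogeneous f (d+1)})
        ?_ ?_ ?_ ?_ hr
      · rintro _ ⟨i, rfl⟩
        -- X i * s, with s ∈ span of homogeneous-d
        refine Submodule.span_induction
          (p := fun s _ => X i * s ∈ Ideal.span {f : R | MvPolynomial.IsHomogeneous f (d+1)})
          ?_ ?_ ?_ ?_ hs'
        · intro f hf
          refine Ideal.subset_span ?_
          have : MvPolynomial.IsHomogeneous (X i * f) (1 + d) :=
            (MvPolynomial.isHomogeneous_X k i).mul hf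
          simpa [add_comm] using this
        · simp
        · intro x y _ _ hx hy
          rw [mul_add]; exact add_mem hx hy
        · intro c x _ hx
          rw [smul_eq_mul, mul_left_comm]
          exact Ideal.mul_mem_left _ c hx
      · simp
      · intro x y _ _ hx hy
        rw [add_mul]; exact add_mem hx hy
      · intro c x _ hx
        rw [smul_eq_mul, mul_assoc]
        exact Ideal.mul_mem_left _ c hx

lemma condStar.pow_le {c : Ideal R} (h : condStar k n c) :
    ∃ D : ℕ, irrel k n ^ D ≤ c := by
  obtain ⟨d, _, hd⟩ := h
  exact ⟨d, le_trans (irrel_pow_le_span_homogeneous d) (Ideal.span_le.2 hd)⟩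

lemma exists_pow_le_prod_sup (s : Finset ℕ) (a : ℕ → Ideal R) (c : Ideal R)
    (h : ∀ i ∈ s, ∃ d : ℕ, irrel k n ^ d ≤ a i ⊔ c) :
    ∃ D : ℕ, irrel k n ^ D ≤ (∏ i ∈ s, a i) ⊔ c := by
  classical
  induction s using Finset.induction_on with
  | empty => exact ⟨0, by simp [Ideal.one_eq_top]⟩
  | @insert j s' hj ih =>
      obtain ⟨d, hd⟩ := h j (Finset.mem_insert_self j s')
      obtain ⟨D, hD⟩ := ih fun i hi => h i (Finset.mem_insert_of_mem hi)
      refine ⟨d + D, ?_⟩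
      rw [pow_add, Finset.prod_insert hj]
      calc irrel k n ^ d * irrel k n ^ D
          ≤ (a j ⊔ c) * ((∏ i ∈ s', a i) ⊔ c) := Ideal.mul_mono hd hD
        _ ≤ a j * (∏ i ∈ s', a i) ⊔ c := by
            rw [Ideal.mul_sup, Ideal.sup_mul, Ideal.sup_mul]
            refine sup_le (sup_le ?_ ?_) (sup_le ?_ ?_)
            · exact le_sup_left
            · exact le_trans Ideal.mul_le_left le_sup_right
            · exact le_trans Ideal.mul_le_right le_sup_right
            · exact le_trans Ideal.mul_le_left le_sup_right

lemma sat_prod_aux (a : ℕ → Ideal R) (m : ℕ)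
    (h : ∀ i j, 1 ≤ i → i < j → j ≤ m → ∃ D : ℕ, irrel k n ^ D ≤ a i ⊔ a j) :
    sat k n (∏ i ∈ Finset.Icc 1 m, a i) = sat k n (⨅ i ∈ Finset.Icc 1 m, a i) := by
  induction m with
  | zero => simp [Ideal.one_eq_top]
  | succ m ih =>
      have hnot : m + 1 ∉ Finset.Icc 1 m := by simp
      have hins : Finset.Icc 1 (m + 1) = insert (m + 1) (Finset.Icc 1 m) := by
        ext x
        simp only [Finset.mem_Icc, Finset.mem_insert]
        omega
      rw [hins, Finset.prod_insert hnot, Finset.iInf_insert]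
      obtain ⟨D, hD⟩ := exists_pow_le_prod_sup (Finset.Icc 1 m) a (a (m + 1))
        (fun i hi => by
          obtain ⟨h1, h2⟩ := Finset.mem_Icc.1 hi
          exact (h i (m + 1) h1 (by omega) le_rfl))
      rw [show a (m+1) * ∏ i ∈ Finset.Icc 1 m, a i
            = (∏ i ∈ Finset.Icc 1 m, a i) * a (m+1) from mul_comm _ _,
        sat_mul_eq_sat_inf ⟨D, hD⟩, sat_inf, sat_inf,
        ih (fun i j h1 h2 h3 => h i j h1 h2 (by omega)), inf_comm]

end Aux

theorem sat_prod_eq_sat_inf (k : Type*) [Field k] [IsAlgClosed k]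
    (n : ℕ) (hn : 0 < n) (m : ℕ) (hm : 2 ≤ m)
    (a : ℕ → Ideal (MvPolynomial (Fin (n+1)) k))
    (ha : ∀ i, 1 ≤ i → i ≤ m → (a i).IsHomogeneous (homogeneousSubmodule (Fin (n+1)) k))
    (h : ∀ i j, 1 ≤ i → i < j → j ≤ m → condStar k n (a i + a j)) :
    sat k n (∏ i ∈ Finset.Icc 1 m, a i) = sat k n (⨅ i ∈ Finset.Icc 1 m, a i) := by
  refine sat_prod_aux a m fun i j h1 h2 h3 => ?_
  have := (h i j h1 h2 h3).pow_le
  simpa [Submodule.add_eq_sup] using this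
end

section
/- Let I be a homogeneous ideal of the standard graded polynomial ring S = k[α_0,…,α_n] and k a positive integer. Then there exists an integer d_0 such that for all integers d_1,…,d_k ≥ d_0, every element of the graded piece (I^k)_{d_1+⋯+d_k} is a k-linear combination of products f_1·f_2·⋯·f_k with f_i ∈ I_{d_i} for each i; that is, the multiplication map I_{d_1} ⊗ ⋯ ⊗ I_{d_k} → (I^k)_{d_1+⋯+d_k} is surjective. -/
open MvPolynomial

attribute [local instance] MvPolynomial.gradedAlgebra

open Pointwise

section Aux

variable {σ : Type*} {R : Type*} [CommRing R]

lemma aux_degree_add (a b : σ →₀ ℕ) : (a + b).degree = a.degree + b.degree := by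
  simp [Finsupp.degree_eq_weight_one, map_add]

lemma aux_split2 (a : ℕ) : ∀ (b : ℕ) (μ : σ →₀ ℕ), μ.degree = a + b →
    ∃ μ₁ μ₂ : σ →₀ ℕ, μ₁.degree = a ∧ μ₂.degree = b ∧ μ₁ + μ₂ = μ := by
  induction a with
  | zero =>
    intro b μ h
    exact ⟨0, μ, by simp [map_zero], by simpa using h, zero_add μ⟩
  | succ a ih =>
    intro b μ h
    have hμ : μ ≠ 0 := by
      intro h0
      rw [h0, map_zero] at h
      omega
    obtain ⟨x, hx⟩ : ∃ x, μ x ≠ 0 := by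
      by_contra hc
      push_neg at hc
      exact hμ (Finsupp.ext fun x => hc x)
    set μ' := μ - Finsupp.single x 1 with hμ'def
    have hadd : μ' + Finsupp.single x 1 = μ := by
      ext y
      rcases eq_or_ne y x with rfl | hy
      · simp [hμ'def]
        omega
      · simp [hμ'def, Finsupp.single_apply, Ne.symm hy]
    have hsingle : (Finsupp.single x 1 : σ →₀ ℕ).degree = 1 := by
      simp [Finsupp.degree_apply, Finsupp.support_single_ne_zero x one_ne_zero]
    have hdeg : μ'.degree = a + b := by
      have := congrArg Finsupp.degree hadd
      rw [aux_degree_add, hsingle] at this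
      omega
    obtain ⟨μ₁, μ₂, h1, h2, h3⟩ := ih b μ' hdeg
    refine ⟨μ₁ + Finsupp.single x 1, μ₂, ?_, h2, ?_⟩
    · rw [aux_degree_add, h1, hsingle]
    · rw [add_right_comm, h3, hadd]

lemma aux_splitFin : ∀ (K : ℕ) (a : Fin K → ℕ) (μ : σ →₀ ℕ),
    μ.degree = ∑ i, a i →
    ∃ τ : Fin K → (σ →₀ ℕ), (∀ i, (τ i).degree = a i) ∧ ∑ i, τ i = μ := by
  intro K
  induction K with
  | zero =>
    intro a μ h
    refine ⟨fun i => 0, fun i => i.elim0, ?_⟩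
    simp only [Finset.univ_eq_empty, Finset.sum_empty]
    symm
    rw [← Finsupp.degree_eq_zero_iff]
    simpa using h
  | succ K ih =>
    intro a μ h
    rw [Fin.sum_univ_succ] at h
    obtain ⟨μ₁, μ₂, h1, h2, h3⟩ := aux_split2 (a 0) _ μ h
    obtain ⟨τ', hτ'1, hτ'2⟩ := ih (fun i => a i.succ) μ₂ h2
    refine ⟨Fin.cons μ₁ τ', ?_, ?_⟩
    · intro i
      refine Fin.cases ?_ ?_ i
      · simpa using h1
      · intro j; simpa using hτ'1 j
    · rw [Fin.sum_univ_succ]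
      simpa using h3 ▸ (by rw [hτ'2])

lemma aux_prod_monomial_one {ι : Type*} (s : Finset ι) (τ : ι → (σ →₀ ℕ)) :
    ∏ j ∈ s, (monomial (τ j) (1 : R)) = monomial (∑ j ∈ s, τ j) 1 := by
  classical
  induction s using Finset.cons_induction with
  | empty => simp
  | cons x s hx ih => rw [Finset.prod_cons, Finset.sum_cons, ih, monomial_mul, one_mul]

lemma aux_support_degree {p : MvPolynomial σ R} {m : ℕ} (hp : p.IsHomogeneous m)
    {μ : σ →₀ ℕ} (hμ : μ ∈ p.support) : μ.degree = m := by
  rw [Finsupp.degree_eq_weight_one]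
  exact hp (mem_support_iff.mp hμ)

lemma aux_hc_mul (q : MvPolynomial σ R) {E : ℕ} (hq : q.IsHomogeneous E)
    (c : MvPolynomial σ R) (m : ℕ) :
    homogeneousComponent (m + E) (c * q) = homogeneousComponent m c * q := by
  classical
  have hrep : c * q = ∑ i ∈ Finset.range (c.totalDegree + 1),
      homogeneousComponent i c * q := by
    rw [← Finset.sum_mul, sum_homogeneousComponent]
  rw [hrep, map_sum]
  have key : ∀ i ∈ Finset.range (c.totalDegree + 1),
      homogeneousComponent (m + E) (homogeneousComponent i c * q)
        = if i = m then homogeneousComponent i c * q else 0 := by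
    intro i _
    rw [homogeneousComponent_of_mem ((homogeneousComponent_isHomogeneous i c).mul hq)]
    simp [Nat.add_right_cancel_iff, eq_comm]
  rw [Finset.sum_congr rfl key, Finset.sum_ite_eq' _ m]
  split_ifs with hm
  · rfl
  · rw [Finset.mem_range, not_lt] at hm
    rw [homogeneousComponent_eq_zero m c (lt_of_lt_of_le (Nat.lt_succ_self _) hm), zero_mul]

lemma aux_hc_mul_zero (q : MvPolynomial σ R) {E : ℕ} (hq : q.IsHomogeneous E)
    (c : MvPolynomial σ R) {D : ℕ} (hD : D < E) :
    homogeneousComponent D (c * q) = 0 := by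
  classical
  have hrep : c * q = ∑ i ∈ Finset.range (c.totalDegree + 1),
      homogeneousComponent i c * q := by
    rw [← Finset.sum_mul, sum_homogeneousComponent]
  rw [hrep, map_sum]
  refine Finset.sum_eq_zero fun i _ => ?_
  rw [homogeneousComponent_of_mem ((homogeneousComponent_isHomogeneous i c).mul hq)]
  rw [if_neg (by omega)]

end Aux

theorem power_multiplication_surjective_in_large_degrees
    (k : Type*) [Field k] [IsAlgClosed k] (n : ℕ) (hn : 0 < n)
    (I : Ideal (MvPolynomial (Fin (n+1)) k))
    (hI : I.IsHomogeneous (homogeneousSubmodule (Fin (n+1)) k))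
    (K : ℕ) (hK : 0 < K) :
    ∃ d₀ : ℕ, ∀ d : Fin K → ℕ, (∀ i, d₀ ≤ d i) →
      ∀ f ∈ I ^ K, f.IsHomogeneous (∑ i, d i) →
        f ∈ Submodule.span k {g : MvPolynomial (Fin (n+1)) k |
          ∃ h : Fin K → MvPolynomial (Fin (n+1)) k,
            (∀ i, h i ∈ I ∧ (h i).IsHomogeneous (d i)) ∧ g = ∏ i, h i} := by
  classical
  obtain ⟨T, hT⟩ : I.FG := IsNoetherian.noetherian I
  set P : Finset (MvPolynomial (Fin (n+1)) k × ℕ) :=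
    T.biUnion (fun t => (Finset.range (t.totalDegree + 1)).image
      fun i => (homogeneousComponent i t, i)) with hP
  set d₀ := P.sup Prod.snd with hd₀
  have hdec : ∀ (t : MvPolynomial (Fin (n+1)) k) (i : ℕ),
      (DirectSum.decompose (homogeneousSubmodule (Fin (n+1)) k) t i :
        MvPolynomial (Fin (n+1)) k) = homogeneousComponent i t :=
    fun t i => decomposition.decompose'_apply t i
  have hPI : ∀ p ∈ P, p.1 ∈ I ∧ p.1.IsHomogeneous p.2 ∧ p.2 ≤ d₀ := by
    intro p hp
    rw [hP, Finset.mem_biUnion] at hp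
    obtain ⟨t, htT, hp⟩ := hp
    rw [Finset.mem_image] at hp
    obtain ⟨i, hi, rfl⟩ := hp
    have htI : t ∈ I := hT ▸ Ideal.subset_span htT
    refine ⟨?_, homogeneousComponent_isHomogeneous i t, ?_⟩
    · have := hI i htI
      rwa [hdec] at this
    · exact Finset.le_sup (f := Prod.snd)
        (by rw [hP, Finset.mem_biUnion]
            exact ⟨t, htT, Finset.mem_image.mpr ⟨i, hi, rfl⟩⟩)
  have hspan : I = Ideal.span (Prod.fst '' (P : Set (MvPolynomial (Fin (n+1)) k × ℕ))) := by
    apply le_antisymm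
    · rw [← hT]
      rw [Ideal.span_le]
      intro t htT
      have : t = ∑ i ∈ Finset.range (t.totalDegree + 1), homogeneousComponent i t :=
        (sum_homogeneousComponent t).symm
      rw [this]
      refine Ideal.sum_mem _ fun i hi => Ideal.subset_span ?_
      exact ⟨(homogeneousComponent i t, i),
        by rw [hP]; exact Finset.mem_coe.mpr (Finset.mem_biUnion.mpr
          ⟨t, htT, Finset.mem_image.mpr ⟨i, hi, rfl⟩⟩), rfl⟩
    · rw [Ideal.span_le]
      rintro _ ⟨p, hp, rfl⟩
      exact (hPI p hp).1
  refine ⟨d₀, fun d hd f hf hfhom => ?_⟩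
  set D := ∑ i, d i with hD
  -- f is in the span of K-fold products of generators
  have hfpow : f ∈ Submodule.span (MvPolynomial (Fin (n+1)) k)
      ((Prod.fst '' (P : Set (MvPolynomial (Fin (n+1)) k × ℕ))) ^ K) := by
    rw [← Submodule.span_pow]
    rw [hspan] at hf
    exact hf
  rw [Submodule.mem_span_set'] at hfpow
  obtain ⟨N, c, g, hcg⟩ := hfpow
  -- extract factorizations
  have hfact : ∀ i : Fin N, ∃ G : Fin K → MvPolynomial (Fin (n+1)) k, ∃ E : Fin K → ℕ,
      (∀ j, G j ∈ I ∧ (G j).IsHomogeneous (E j) ∧ E j ≤ d₀) ∧ (∏ j, G j) = (g i : _) := by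
    intro i
    obtain ⟨w, hw⟩ := Set.mem_pow.mp (g i).2
    choose pq hpq hpq2 using fun j => (w j).2
    refine ⟨fun j => (w j : MvPolynomial (Fin (n+1)) k), fun j => (pq j).2, fun j => ?_, ?_⟩
    · obtain ⟨h1, h2, h3⟩ := hPI (pq j) (hpq j)
      rw [hpq2 j] at h1 h2
      exact ⟨h1, h2, h3⟩
    · rw [← hw, List.prod_ofFn]
  choose G E hGE hGprod using hfact
  -- rewrite f as a sum of homogeneous components of terms
  have hf_eq : f = ∑ i : Fin N, homogeneousComponent D (c i * ∏ j, G i j) := by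
    have h1 : homogeneousComponent D f = f := by
      rw [homogeneousComponent_of_mem hfhom, if_pos rfl]
    conv_lhs => rw [← h1, ← hcg]
    rw [map_sum]
    refine Finset.sum_congr rfl fun i _ => ?_
    rw [smul_eq_mul, hGprod i]
  rw [hf_eq]
  refine Submodule.sum_mem _ fun i _ => ?_
  -- each term
  have hq : (∏ j, G i j).IsHomogeneous (∑ j, E i j) :=
    IsHomogeneous.prod _ _ _ fun j _ => (hGE i j).2.1
  by_cases hED : (∑ j, E i j) ≤ D
  · have hsub : ∀ j, E i j ≤ d j := fun j => le_trans (hGE i j).2.2 (hd j)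
    have hDsplit : D - (∑ j, E i j) = ∑ j, (d j - E i j) := by
      have : ∑ j, (d j - E i j) + ∑ j, E i j = D := by
        rw [← Finset.sum_add_distrib]
        exact Finset.sum_congr rfl fun j _ => Nat.sub_add_cancel (hsub j)
      omega
    have hmul : homogeneousComponent D (c i * ∏ j, G i j)
        = homogeneousComponent (D - ∑ j, E i j) (c i) * ∏ j, G i j := by
      have h' : D = (D - ∑ j, E i j) + ∑ j, E i j := (Nat.sub_add_cancel hED).symm
      conv_lhs => rw [h']
      rw [aux_hc_mul _ hq]
    rw [hmul]
    set p := homogeneousComponent (D - ∑ j, E i j) (c i) with hp'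
    have hrewrite : p * ∏ j, G i j = ∑ μ ∈ p.support,
        (coeff μ p) • ((monomial μ (1 : k)) * ∏ j, G i j) := by
      conv_lhs => rw [p.as_sum, Finset.sum_mul]
      refine Finset.sum_congr rfl fun μ _ => ?_
      rw [← smul_mul_assoc, smul_monomial, smul_eq_mul, mul_one]
    rw [hrewrite]
    refine Submodule.sum_mem _ fun μ hμ => Submodule.smul_mem _ _ (Submodule.subset_span ?_)
    -- factor the monomial
    have hμdeg : μ.degree = ∑ j, (d j - E i j) := by
      rw [aux_support_degree (homogeneousComponent_isHomogeneous _ (c i)) hμ, hDsplit]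
    obtain ⟨τ, hτ1, hτ2⟩ := aux_splitFin K _ μ hμdeg
    refine ⟨fun j => monomial (τ j) 1 * G i j, fun j => ?_, ?_⟩
    · constructor
      · exact Ideal.mul_mem_left _ _ (hGE i j).1
      · have := (isHomogeneous_monomial (1 : k) (hτ1 j)).mul (hGE i j).2.1
        rwa [Nat.sub_add_cancel (hsub j)] at this
    · rw [Finset.prod_mul_distrib, aux_prod_monomial_one, hτ2]
  · rw [aux_hc_mul_zero _ hq _ (by omega)]
    exact Submodule.zero_mem _
end

section
/- Let T = k[α_1, α_2] be a polynomial ring in two variables over a field k, and let J ⊆ I be monomial ideals of T such that T/J is a finite-dimensional k-vector space. Then the natural map T → Hom_T(J, I) sending f to the multiplication map g ↦ f·g is an isomorphism of T-modules; in particular, every T-module homomorphism φ: J → I is multiplication by a unique polynomial f ∈ T. -/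
open MvPolynomial

/-- A monomial ideal: an ideal generated by monomials. -/
def IsMonomialIdeal {k : Type*} [Field k] (I : Ideal (MvPolynomial (Fin 2) k)) : Prop :=
  ∃ A : Set (Fin 2 →₀ ℕ), I = Ideal.span ((fun c => monomial c (1 : k)) '' A)

/-- The natural map `T → Hom_T(J, I)` sending `f` to the multiplication map `g ↦ f·g`. -/
noncomputable def mulMap {k : Type*} [Field k]
    (J I : Ideal (MvPolynomial (Fin 2) k)) (h : J ≤ I) (f : MvPolynomial (Fin 2) k) :
    (↥J) →ₗ[MvPolynomial (Fin 2) k] (↥I) where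
  toFun g := ⟨f * g, I.mul_mem_left f (h g.2)⟩
  map_add' x y := Subtype.ext (by simp [mul_add])
  map_smul' c x := Subtype.ext (by simp [smul_eq_mul]; ring)

/-- If a nonzero coefficient exists at exponent `d` for an element of a monomial span,
then some generator exponent divides `d`. -/
lemma exists_le_of_coeff_ne_zero {k : Type*} [Field k] {A : Set (Fin 2 →₀ ℕ)}
    {f : MvPolynomial (Fin 2) k}
    (hf : f ∈ Ideal.span ((fun c => monomial c (1 : k)) '' A))
    {d : Fin 2 →₀ ℕ} (hd : coeff d f ≠ 0) : ∃ c ∈ A, c ≤ d := by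
  rw [Ideal.span, Submodule.mem_span_set] at hf
  obtain ⟨c, hsupp, hsum⟩ := hf
  by_contra hcon
  push_neg at hcon
  apply hd
  rw [← hsum]
  rw [Finsupp.sum]
  rw [MvPolynomial.coeff_sum]
  apply Finset.sum_eq_zero
  intro m hm
  obtain ⟨e, heA, rfl⟩ := hsupp hm
  rw [smul_eq_mul, coeff_mul_monomial']
  rw [if_neg (hcon e heA)]

/-- In a monomial ideal of finite colength, some power of each variable lies in the ideal. -/
lemma exists_X_pow_mem {k : Type*} [Field k] {J : Ideal (MvPolynomial (Fin 2) k)}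
    (hJm : IsMonomialIdeal J)
    (hfin : FiniteDimensional k (MvPolynomial (Fin 2) k ⧸ J)) (i : Fin 2) :
    ∃ n : ℕ, (X i : MvPolynomial (Fin 2) k) ^ n ∈ J := by
  classical
  have hnli : ¬ LinearIndependent k
      (fun n : ℕ => Ideal.Quotient.mk J ((X i : MvPolynomial (Fin 2) k) ^ n)) :=
    Module.Finite.not_linearIndependent_of_infinite _
  rw [linearIndependent_iff] at hnli
  push_neg at hnli
  obtain ⟨l, hl0, hlne⟩ := hnli
  -- the polynomial with these coefficients
  set p : MvPolynomial (Fin 2) k := l.sum fun n a => monomial (Finsupp.single i n) a with hp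
  have hmem : p ∈ J := by
    rw [← Ideal.Quotient.eq_zero_iff_mem, hp, Finsupp.sum, map_sum, ← hl0,
      Finsupp.linearCombination_apply, Finsupp.sum]
    apply Finset.sum_congr rfl
    intro n _
    rw [X_pow_eq_monomial]
    have hms := map_smul (Ideal.Quotient.mkₐ k J) (l n)
      (monomial (Finsupp.single i n) (1 : k))
    rw [Ideal.Quotient.mkₐ_eq_mk] at hms
    rw [← hms, smul_monomial, smul_eq_mul, mul_one]
  obtain ⟨m, hm⟩ := Finsupp.ne_iff.mp hlne
  rw [Finsupp.coe_zero, Pi.zero_apply] at hm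
  have hcoeff : coeff (Finsupp.single i m) p = l m := by
    rw [hp, Finsupp.sum, MvPolynomial.coeff_sum]
    have : ∀ n ∈ l.support,
        coeff (Finsupp.single i m) (monomial (Finsupp.single i n) (l n))
          = if n = m then l n else 0 := by
      intro n _
      rw [coeff_monomial]
      congr 1
      simp only [eq_iff_iff]
      constructor
      · intro h; exact (Finsupp.single_injective i) h
      · intro h; rw [h]
    rw [Finset.sum_congr rfl this, Finset.sum_ite_eq' l.support m (fun n => l n),
      if_pos (Finsupp.mem_support_iff.mpr hm)]
  obtain ⟨A, hA⟩ := hJm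
  have hmem' : p ∈ Ideal.span ((fun c => monomial c (1 : k)) '' A) := hA ▸ hmem
  obtain ⟨c, hcA, hcle⟩ := exists_le_of_coeff_ne_zero hmem' (hcoeff ▸ hm)
  refine ⟨m, ?_⟩
  rw [X_pow_eq_monomial, hA]
  have : monomial (Finsupp.single i m) (1 : k)
      = monomial (Finsupp.single i m - c) (1 : k) * monomial c (1 : k) := by
    rw [monomial_mul, one_mul, tsub_add_cancel_of_le hcle]
  rw [this]
  exact Ideal.mul_mem_left _ _ (Ideal.subset_span ⟨c, hcA, rfl⟩)

lemma prime_X_zero {k : Type*} [Field k] : Prime (X 0 : MvPolynomial (Fin 2) k) := by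
  refine (MulEquiv.prime_iff (p := (X 0 : MvPolynomial (Fin 2) k))
    (MvPolynomial.finSuccEquiv k 1).toMulEquiv).mp ?_
  have : (MvPolynomial.finSuccEquiv k 1).toMulEquiv (X 0) = Polynomial.X := by
    show (MvPolynomial.finSuccEquiv k 1) (X 0) = Polynomial.X
    exact finSuccEquiv_X_zero
  rw [this]
  exact Polynomial.prime_X

theorem mulMap_linear_bijective (k : Type*) [Field k] [IsAlgClosed k]
    (J I : Ideal (MvPolynomial (Fin 2) k)) (hJI : J ≤ I)
    (hJm : IsMonomialIdeal J) (hIm : IsMonomialIdeal I)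
    (hfin : FiniteDimensional k (MvPolynomial (Fin 2) k ⧸ J)) :
    IsLinearMap (MvPolynomial (Fin 2) k) (mulMap J I hJI) ∧
      Function.Bijective (mulMap J I hJI) ∧
      ∀ φ : (↥J) →ₗ[MvPolynomial (Fin 2) k] (↥I),
        ∃! f : MvPolynomial (Fin 2) k, ∀ g : ↥J, (φ g : MvPolynomial (Fin 2) k) = f * g := by
  obtain ⟨n, hu⟩ := exists_X_pow_mem hJm hfin 0
  obtain ⟨m, hv⟩ := exists_X_pow_mem hJm hfin 1
  set u : ↥J := ⟨(X 0 : MvPolynomial (Fin 2) k) ^ n, hu⟩ with hudef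
  set v : ↥J := ⟨(X 1 : MvPolynomial (Fin 2) k) ^ m, hv⟩ with hvdef
  have hune : ((u : MvPolynomial (Fin 2) k)) ≠ 0 := pow_ne_zero n (X_ne_zero 0)
  -- key commutation identity
  have key : ∀ (φ : (↥J) →ₗ[MvPolynomial (Fin 2) k] (↥I)) (g h : ↥J),
      (g : MvPolynomial (Fin 2) k) * (φ h : MvPolynomial (Fin 2) k)
        = (h : MvPolynomial (Fin 2) k) * (φ g : MvPolynomial (Fin 2) k) := by
    intro φ g h
    have hgh : ((g : MvPolynomial (Fin 2) k) • h : ↥J)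
        = ((h : MvPolynomial (Fin 2) k) • g : ↥J) :=
      Subtype.ext (by simp [smul_eq_mul, mul_comm])
    calc (g : MvPolynomial (Fin 2) k) * (φ h : MvPolynomial (Fin 2) k)
        = ((((g : MvPolynomial (Fin 2) k) • (φ h)) : ↥I) : MvPolynomial (Fin 2) k) := by
          simp [smul_eq_mul]
      _ = ((φ ((g : MvPolynomial (Fin 2) k) • h) : ↥I) : MvPolynomial (Fin 2) k) := by
          rw [map_smul]
      _ = ((φ ((h : MvPolynomial (Fin 2) k) • g) : ↥I) : MvPolynomial (Fin 2) k) := by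
          rw [hgh]
      _ = ((((h : MvPolynomial (Fin 2) k) • (φ g)) : ↥I) : MvPolynomial (Fin 2) k) := by
          rw [map_smul]
      _ = (h : MvPolynomial (Fin 2) k) * (φ g : MvPolynomial (Fin 2) k) := by
          simp [smul_eq_mul]
  -- every φ is multiplication by some f
  have hrep : ∀ φ : (↥J) →ₗ[MvPolynomial (Fin 2) k] (↥I),
      ∃ f : MvPolynomial (Fin 2) k, ∀ g : ↥J,
        (φ g : MvPolynomial (Fin 2) k) = f * g := by
    intro φ
    have hkey := key φ u v
    have hndvd : ¬ (X 0 : MvPolynomial (Fin 2) k) ∣ (X 1 : MvPolynomial (Fin 2) k) ^ m := by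
      intro hdvd
      have hdvd' := prime_X_zero.dvd_of_dvd_pow hdvd
      obtain ⟨c, hc⟩ := hdvd'
      have := congrArg (aeval (fun j : Fin 2 => if j = 0 then (0 : k) else 1)) hc
      simp at this
    have hdvd : (X 0 : MvPolynomial (Fin 2) k) ^ n
        ∣ (φ u : MvPolynomial (Fin 2) k) * (X 1 : MvPolynomial (Fin 2) k) ^ m := by
      rw [mul_comm]
      have : (u : MvPolynomial (Fin 2) k) * (φ v : MvPolynomial (Fin 2) k)
          = (X 1 : MvPolynomial (Fin 2) k) ^ m * (φ u : MvPolynomial (Fin 2) k) := hkey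
      rw [← this]
      exact Dvd.intro _ rfl
    obtain ⟨f, hf⟩ := prime_X_zero.pow_dvd_of_dvd_mul_right n hndvd hdvd
    refine ⟨f, fun g => ?_⟩
    have h2 := key φ u g
    -- h2 : X0^n * φ g = g * φ u
    have h3 : (X 0 : MvPolynomial (Fin 2) k) ^ n * (φ g : MvPolynomial (Fin 2) k)
        = (X 0 : MvPolynomial (Fin 2) k) ^ n * (f * (g : MvPolynomial (Fin 2) k)) := by
      rw [h2, hf]; ring
    exact mul_left_cancel₀ hune h3
  refine ⟨⟨?_, ?_⟩, ⟨?_, ?_⟩, ?_⟩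
  · intro f f'
    apply LinearMap.ext
    intro g
    exact Subtype.ext (by simp [mulMap, add_mul])
  · intro c f
    apply LinearMap.ext
    intro g
    refine Subtype.ext ?_
    show (c * f) * (g : MvPolynomial (Fin 2) k)
        = c • ((f * (g : MvPolynomial (Fin 2) k)))
    rw [smul_eq_mul]; ring
  · -- injective
    intro f f' h
    have := congrArg (fun ψ : (↥J) →ₗ[MvPolynomial (Fin 2) k] (↥I) =>
      ((ψ u : ↥I) : MvPolynomial (Fin 2) k)) h
    simp only [mulMap] at this
    exact mul_right_cancel₀ hune this
  · -- surjective
    intro φ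
    obtain ⟨f, hf⟩ := hrep φ
    refine ⟨f, ?_⟩
    apply LinearMap.ext
    intro g
    exact Subtype.ext (hf g).symm
  · -- unique representation
    intro φ
    obtain ⟨f, hf⟩ := hrep φ
    refine ⟨f, hf, fun f' hf' => ?_⟩
    have h1 := hf u
    have h2 := hf' u
    rw [h1] at h2
    exact (mul_right_cancel₀ hune h2.symm)
end

section
/- Let T = k[α_1, α_2] and let J = (α_1^{a_0}, α_1^{a_1}α_2^{b_1}, …, α_1^{a_{m−1}}α_2^{b_{m−1}}, α_2^{b_m}) be a monomial ideal with T/J finite-dimensional over k, where a_0 > a_1 > ⋯ > a_{m−1} > a_m = 0 and 0 = b_0 < b_1 < ⋯ < b_m. Then for every positive integer c, the k-linear map ψ: ⊕_{i=0}^{m} T_{a_i+b_i+c} → ⊕_{i=1}^{m} T_{a_{i−1}+b_i+c} defined by ψ(f_0, …, f_m) = (α_2^{b_i−b_{i−1}}·f_{i−1} − α_1^{a_{i−1}−a_i}·f_i)_{i=1,…,m} is surjective. -/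
open MvPolynomial

lemma deg_two_eq (s : Fin 2 →₀ ℕ) : s.degree = s 0 + s 1 := by
  rw [Finsupp.degree, ← Fin.sum_univ_two (fun i => s i)]
  exact Finset.sum_subset (Finset.subset_univ _) (fun x _ hx => Finsupp.notMem_support_iff.mp hx)

lemma split_homog {k : Type*} [CommRing k] (d A B : ℕ) (hd : A + B ≤ d)
    (g : MvPolynomial (Fin 2) k) (hg : g.IsHomogeneous d) :
    ∃ P Q : MvPolynomial (Fin 2) k, P.IsHomogeneous (d - B) ∧ Q.IsHomogeneous (d - A) ∧
      g = X 1 ^ B * P + X 0 ^ A * Q := by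
  classical
  have key : ∀ s ∈ g.support, s 0 + s 1 = d := by
    intro s hs
    rw [← deg_two_eq, Finsupp.degree_eq_weight_one]
    exact hg (mem_support_iff.mp hs)
  set S := g.support.filter (fun s => B ≤ s 1) with hS
  refine ⟨∑ s ∈ S, monomial (s - Finsupp.single 1 B) (g.coeff s),
         ∑ s ∈ g.support \ S, monomial (s - Finsupp.single 0 A) (g.coeff s), ?_, ?_, ?_⟩
  · apply IsHomogeneous.sum
    intro s hs
    have hs1 : s ∈ g.support := (Finset.mem_filter.mp hs).1
    have hB : B ≤ s 1 := (Finset.mem_filter.mp hs).2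
    apply isHomogeneous_monomial
    rw [deg_two_eq]
    have h0 : ((s - Finsupp.single 1 B : Fin 2 →₀ ℕ)) 0 = s 0 := by
      rw [Finsupp.tsub_apply, Finsupp.single_apply]; simp
    have h1 : ((s - Finsupp.single 1 B : Fin 2 →₀ ℕ)) 1 = s 1 - B := by
      rw [Finsupp.tsub_apply, Finsupp.single_apply]; simp
    have := key s hs1
    omega
  · apply IsHomogeneous.sum
    intro s hs
    have hs1 : s ∈ g.support := (Finset.mem_sdiff.mp hs).1
    have hB : ¬ B ≤ s 1 := by
      have := (Finset.mem_sdiff.mp hs).2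
      simp only [hS, Finset.mem_filter, hs1, true_and] at this
      exact this
    apply isHomogeneous_monomial
    rw [deg_two_eq]
    have h0 : ((s - Finsupp.single 0 A : Fin 2 →₀ ℕ)) 0 = s 0 - A := by
      rw [Finsupp.tsub_apply, Finsupp.single_apply]; simp
    have h1 : ((s - Finsupp.single 0 A : Fin 2 →₀ ℕ)) 1 = s 1 := by
      rw [Finsupp.tsub_apply, Finsupp.single_apply]; simp
    have := key s hs1
    omega
  · rw [Finset.mul_sum, Finset.mul_sum]
    have e1 : ∀ s ∈ S, X 1 ^ B * monomial (s - Finsupp.single 1 B) (g.coeff s)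
        = monomial s (g.coeff s) := by
      intro s hs
      have hB : B ≤ s 1 := (Finset.mem_filter.mp hs).2
      rw [X_pow_eq_monomial, monomial_mul, one_mul,
        add_tsub_cancel_of_le (Finsupp.single_le_iff.mpr hB)]
    have e2 : ∀ s ∈ g.support \ S, X 0 ^ A * monomial (s - Finsupp.single 0 A) (g.coeff s)
        = monomial s (g.coeff s) := by
      intro s hs
      have hs1 : s ∈ g.support := (Finset.mem_sdiff.mp hs).1
      have hB : ¬ B ≤ s 1 := by
        have := (Finset.mem_sdiff.mp hs).2
        simp only [hS, Finset.mem_filter, hs1, true_and] at this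
        exact this
      have hA : A ≤ s 0 := by have := key s hs1; omega
      rw [X_pow_eq_monomial, monomial_mul, one_mul,
        add_tsub_cancel_of_le (Finsupp.single_le_iff.mpr hA)]
    rw [Finset.sum_congr rfl e1, Finset.sum_congr rfl e2, add_comm,
      Finset.sum_sdiff (Finset.filter_subset _ _), support_sum_monomial_coeff]

/-- Here `T = k[α₁, α₂]` with `α₁ = X 0` and `α₂ = X 1`. The map `ψ`, obtained by applying
`Hom_T(-, T)` in degree `c` to the canonical minimal free resolution of `T/J`, sends
`(f₀, …, f_m)` to `(α₂^(bᵢ-b_{i-1})·f_{i-1} - α₁^(a_{i-1}-aᵢ)·fᵢ)_{i=1,…,m}`; it is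
surjective on the relevant spaces of homogeneous polynomials. -/
theorem psi_surjective (k : Type*) [Field k] [IsAlgClosed k]
    (m : ℕ) (hm : 1 ≤ m) (a b : ℕ → ℕ)
    (ha : ∀ i < m, a (i+1) < a i) (ham : a m = 0)
    (hb0 : b 0 = 0) (hb : ∀ i < m, b i < b (i+1))
    (J : Ideal (MvPolynomial (Fin 2) k))
    (hJ : J = Ideal.span ((fun i => X 0 ^ a i * X 1 ^ b i) '' Set.Iic m))
    (hfin : FiniteDimensional k (MvPolynomial (Fin 2) k ⧸ J))
    (c : ℕ) (hc : 0 < c) :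
    ∀ g : ℕ → MvPolynomial (Fin 2) k,
      (∀ i, 1 ≤ i → i ≤ m → (g i).IsHomogeneous (a (i-1) + b i + c)) →
      ∃ f : ℕ → MvPolynomial (Fin 2) k,
        (∀ i ≤ m, (f i).IsHomogeneous (a i + b i + c)) ∧
        ∀ i, 1 ≤ i → i ≤ m →
          g i = X 1 ^ (b i - b (i-1)) * f (i-1) - X 0 ^ (a (i-1) - a i) * f i := by
  intro g hgh
  classical
  -- monotonicity of a and b
  have hamono : ∀ i j : ℕ, i ≤ j → j ≤ m → a j ≤ a i := by
    intro i j hij hj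
    induction j with
    | zero => cases Nat.eq_zero_of_le_zero hij; exact le_rfl
    | succ n ih =>
      rcases Nat.lt_or_ge i (n+1) with h | h
      · exact le_trans (le_of_lt (ha n (by omega))) (ih (by omega) (by omega))
      · have : i = n + 1 := by omega
        subst this; exact le_rfl
  have hbmono : ∀ i j : ℕ, i ≤ j → j ≤ m → b i ≤ b j := by
    intro i j hij hj
    induction j with
    | zero => cases Nat.eq_zero_of_le_zero hij; exact le_rfl
    | succ n ih =>
      rcases Nat.lt_or_ge i (n+1) with h | h
      · exact le_trans (ih (by omega) (by omega)) (le_of_lt (hb n (by omega)))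
      · have : i = n + 1 := by omega
        subst this; exact le_rfl
  -- split each g i
  have key : ∀ i : ℕ, ∃ PQ : MvPolynomial (Fin 2) k × MvPolynomial (Fin 2) k,
      1 ≤ i → i ≤ m → (PQ.1.IsHomogeneous (a (i-1) + c) ∧ PQ.2.IsHomogeneous (b i + c) ∧
        g i = X 1 ^ (b i) * PQ.1 + X 0 ^ (a (i-1)) * PQ.2) := by
    intro i
    by_cases h : 1 ≤ i ∧ i ≤ m
    · obtain ⟨P, Q, hP, hQ, hE⟩ := split_homog (a (i-1) + b i + c) (a (i-1)) (b i)
        (by omega) (g i) (hgh i h.1 h.2)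
      refine ⟨(P, Q), fun _ _ => ⟨?_, ?_, hE⟩⟩
      · have e : a (i-1) + b i + c - b i = a (i-1) + c := by omega
        rwa [e] at hP
      · have e : a (i-1) + b i + c - a (i-1) = b i + c := by omega
        rwa [e] at hQ
    · exact ⟨(0, 0), fun h1 h2 => absurd ⟨h1, h2⟩ h⟩
  choose PQ hPQ using key
  refine ⟨fun j => (∑ i ∈ Finset.Ioc j m, (PQ i).1 * X 0 ^ (a j - a (i-1)) * X 1 ^ (b j))
      - ∑ i ∈ Finset.Icc 1 j, (PQ i).2 * (X 0 ^ (a j) * X 1 ^ (b j - b i)), ?_, ?_⟩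
  · intro j hj
    dsimp only
    apply IsHomogeneous.sub
    · apply IsHomogeneous.sum
      intro i hi
      have hi' := Finset.mem_Ioc.mp hi
      have h1 : (PQ i).1.IsHomogeneous (a (i-1) + c) := (hPQ i (by omega) hi'.2).1
      have h2 := (h1.mul (isHomogeneous_X_pow 0 (a j - a (i-1)))).mul
        (isHomogeneous_X_pow 1 (b j))
      have e : a (i-1) + c + (a j - a (i-1)) + b j = a j + b j + c := by
        have := hamono j (i-1) (by omega) (by omega); omega
      rwa [e] at h2
    · apply IsHomogeneous.sum
      intro i hi
      have hi' := Finset.mem_Icc.mp hi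
      have h1 : (PQ i).2.IsHomogeneous (b i + c) := (hPQ i hi'.1 (by omega)).2.1
      have h2 := h1.mul ((isHomogeneous_X_pow 0 (a j)).mul
        (isHomogeneous_X_pow 1 (b j - b i)))
      have e : b i + c + (a j + (b j - b i)) = a j + b j + c := by
        have := hbmono i j hi'.2 hj; omega
      rwa [e] at h2
  · intro i h1 h2
    obtain ⟨hPh, hQh, hgi⟩ := hPQ i h1 h2
    dsimp only
    have e1 : X 1 ^ (b i - b (i-1)) *
        ((∑ l ∈ Finset.Ioc (i-1) m, (PQ l).1 * X 0 ^ (a (i-1) - a (l-1)) * X 1 ^ (b (i-1)))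
          - ∑ l ∈ Finset.Icc 1 (i-1), (PQ l).2 * (X 0 ^ (a (i-1)) * X 1 ^ (b (i-1) - b l)))
        = (∑ l ∈ Finset.Ioc (i-1) m, (PQ l).1 * X 0 ^ (a (i-1) - a (l-1)) * X 1 ^ (b i))
          - ∑ l ∈ Finset.Icc 1 (i-1), (PQ l).2 * (X 0 ^ (a (i-1)) * X 1 ^ (b i - b l)) := by
      rw [mul_sub, Finset.mul_sum, Finset.mul_sum]
      congr 1
      · apply Finset.sum_congr rfl
        intro l hl
        have e : (b i - b (i-1)) + b (i-1) = b i := by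
          have := hbmono (i-1) i (by omega) h2; omega
        rw [show X 1 ^ (b i - b (i-1)) * ((PQ l).1 * X 0 ^ (a (i-1) - a (l-1)) * X 1 ^ (b (i-1)))
            = (PQ l).1 * X 0 ^ (a (i-1) - a (l-1)) * (X 1 ^ (b i - b (i-1)) * X 1 ^ (b (i-1)))
            from by ring, ← pow_add, e]
      · apply Finset.sum_congr rfl
        intro l hl
        have hl' := Finset.mem_Icc.mp hl
        have e : (b i - b (i-1)) + (b (i-1) - b l) = b i - b l := by
          have h3 := hbmono (i-1) i (by omega) h2
          have h4 := hbmono l (i-1) hl'.2 (by omega)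
          omega
        rw [show X 1 ^ (b i - b (i-1)) * ((PQ l).2 * (X 0 ^ (a (i-1)) * X 1 ^ (b (i-1) - b l)))
            = (PQ l).2 * (X 0 ^ (a (i-1)) * (X 1 ^ (b i - b (i-1)) * X 1 ^ (b (i-1) - b l)))
            from by ring, ← pow_add, e]
    have e2 : X 0 ^ (a (i-1) - a i) *
        ((∑ l ∈ Finset.Ioc i m, (PQ l).1 * X 0 ^ (a i - a (l-1)) * X 1 ^ (b i))
          - ∑ l ∈ Finset.Icc 1 i, (PQ l).2 * (X 0 ^ (a i) * X 1 ^ (b i - b l)))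
        = (∑ l ∈ Finset.Ioc i m, (PQ l).1 * X 0 ^ (a (i-1) - a (l-1)) * X 1 ^ (b i))
          - ∑ l ∈ Finset.Icc 1 i, (PQ l).2 * (X 0 ^ (a (i-1)) * X 1 ^ (b i - b l)) := by
      rw [mul_sub, Finset.mul_sum, Finset.mul_sum]
      congr 1
      · apply Finset.sum_congr rfl
        intro l hl
        have hl' := Finset.mem_Ioc.mp hl
        have e : (a (i-1) - a i) + (a i - a (l-1)) = a (i-1) - a (l-1) := by
          have h3 := hamono (i-1) i (by omega) h2
          have h4 := hamono i (l-1) (by omega) (by omega)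
          omega
        rw [show X 0 ^ (a (i-1) - a i) * ((PQ l).1 * X 0 ^ (a i - a (l-1)) * X 1 ^ (b i))
            = (PQ l).1 * (X 0 ^ (a (i-1) - a i) * X 0 ^ (a i - a (l-1))) * X 1 ^ (b i)
            from by ring, ← pow_add, e]
      · apply Finset.sum_congr rfl
        intro l hl
        have e : (a (i-1) - a i) + a i = a (i-1) := by
          have := hamono (i-1) i (by omega) h2; omega
        rw [show X 0 ^ (a (i-1) - a i) * ((PQ l).2 * (X 0 ^ (a i) * X 1 ^ (b i - b l)))
            = (PQ l).2 * ((X 0 ^ (a (i-1) - a i) * X 0 ^ (a i)) * X 1 ^ (b i - b l))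
            from by ring, ← pow_add, e]
    rw [e1, e2]
    have hset1 : Finset.Ioc (i-1) m = insert i (Finset.Ioc i m) := by
      ext x; simp only [Finset.mem_Ioc, Finset.mem_insert]; omega
    have hset2 : Finset.Icc 1 i = insert i (Finset.Icc 1 (i-1)) := by
      ext x; simp only [Finset.mem_Icc, Finset.mem_insert]; omega
    rw [hset1, Finset.sum_insert (by simp), hset2, Finset.sum_insert (by simp; omega)]
    rw [hgi, Nat.sub_self, Nat.sub_self, pow_zero, pow_zero]
    ring
end

section
/- Let S = k[α_0, α_1, α_2] and fix integers e, d, r with C(e+1, 2) < d < r < C(e+2, 2) and r − d ≤ d − s, where s = C(e+1, 2) = dim_k S_{e−1}. Set A_i = α_1^i α_2^{e−i}, B_i = α_1^i α_2^{e+1−i}, C_i = α_1^i α_2^{e+2−i}. Let J = (A_i for d−s ≤ i ≤ e; B_i for r−d ≤ i ≤ d−s−1; C_i for 0 ≤ i ≤ r−d−1) and I = (A_i for r−s ≤ i ≤ e; A_i·α_2 and A_i·α_0 for d−s ≤ i ≤ r−s−1; B_i for r−d ≤ i ≤ d−s−1; C_i for 0 ≤ i ≤ r−d−1). Then dim_k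 Hom_S(J/I, S/I)_0 = (r−d)². -/
open MvPolynomial

/-- `A_i = α₁^i α₂^(e-i)` where `α₀ = X 0`, `α₁ = X 1`, `α₂ = X 2`. -/
noncomputable def A (k : Type*) [Field k] (e i : ℕ) : MvPolynomial (Fin 3) k :=
  X 1 ^ i * X 2 ^ (e - i)

/-- `B_i = α₁^i α₂^(e+1-i)`. -/
noncomputable def B (k : Type*) [Field k] (e i : ℕ) : MvPolynomial (Fin 3) k :=
  X 1 ^ i * X 2 ^ (e + 1 - i)

/-- `C_i = α₁^i α₂^(e+2-i)`. -/
noncomputable def C (k : Type*) [Field k] (e i : ℕ) : MvPolynomial (Fin 3) k :=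
  X 1 ^ i * X 2 ^ (e + 2 - i)

/-- The ideal `J = (A_i for d-s ≤ i ≤ e; B_i for r-d ≤ i ≤ d-s-1; C_i for 0 ≤ i ≤ r-d-1)`. -/
noncomputable def Jf (k : Type*) [Field k] (e d r s : ℕ) : Ideal (MvPolynomial (Fin 3) k) :=
  Ideal.span (A k e '' Set.Icc (d - s) e ∪ B k e '' Set.Icc (r - d) (d - s - 1) ∪
    C k e '' Set.Iic (r - d - 1))

/-- The ideal `I = (A_i for r-s ≤ i ≤ e; A_i·α₂ and A_i·α₀ for d-s ≤ i ≤ r-s-1;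
B_i for r-d ≤ i ≤ d-s-1; C_i for 0 ≤ i ≤ r-d-1)`. -/
noncomputable def If (k : Type*) [Field k] (e d r s : ℕ) : Ideal (MvPolynomial (Fin 3) k) :=
  Ideal.span (A k e '' Set.Icc (r - s) e ∪
    (fun i => A k e i * X 2) '' Set.Icc (d - s) (r - s - 1) ∪
    (fun i => A k e i * X 0) '' Set.Icc (d - s) (r - s - 1) ∪
    B k e '' Set.Icc (r - d) (d - s - 1) ∪
    C k e '' Set.Iic (r - d - 1))

/-- The degree-`d` graded piece of `S/I`. -/
noncomputable def quotPiece (k : Type*) [Field k]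
    (I : Ideal (MvPolynomial (Fin 3) k)) (d : ℕ) :
    Submodule k (MvPolynomial (Fin 3) k ⧸ I) :=
  (homogeneousSubmodule (Fin 3) k d).map (Ideal.Quotient.mkₐ k I).toLinearMap

/-- The `k`-vector space `Hom_S(J/I, S/I)₀` of degree-preserving `S`-module homomorphisms,
where `J/I` is graded by the images of the homogeneous elements of `J`. -/
noncomputable def HomQuot0 (k : Type*) [Field k]
    (J I : Ideal (MvPolynomial (Fin 3) k)) :
    Submodule k ((↥J ⧸ Submodule.comap (Submodule.subtype J) I)
      →ₗ[MvPolynomial (Fin 3) k] (MvPolynomial (Fin 3) k ⧸ I)) where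
  carrier := {φ | ∀ (d : ℕ) (f : ↥J), (f : MvPolynomial (Fin 3) k).IsHomogeneous d →
    φ (Submodule.Quotient.mk f) ∈ quotPiece k I d}
  add_mem' := fun h1 h2 d f hf => by
    simpa using Submodule.add_mem _ (h1 d f hf) (h2 d f hf)
  zero_mem' := fun d f hf => by simp
  smul_mem' := fun r φ h d f hf => by
    simpa using Submodule.smul_mem _ r (h d f hf)

namespace HQAux

/-- exponent vector `(a, b, c)` as a finsupp on `Fin 3` -/
noncomputable def gv (a b c : ℕ) : Fin 3 →₀ ℕ :=
  Finsupp.single 0 a + Finsupp.single 1 b + Finsupp.single 2 c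

@[simp] lemma gv_apply0 (a b c : ℕ) : gv a b c 0 = a := by
  simp [gv, Finsupp.single_apply]
@[simp] lemma gv_apply1 (a b c : ℕ) : gv a b c 1 = b := by
  simp [gv, Finsupp.single_apply]
@[simp] lemma gv_apply2 (a b c : ℕ) : gv a b c 2 = c := by
  simp [gv, Finsupp.single_apply]

lemma gv_eta (m : Fin 3 →₀ ℕ) : gv (m 0) (m 1) (m 2) = m := by
  ext j
  fin_cases j <;> simp

lemma gv_le_iff {a b c : ℕ} {m : Fin 3 →₀ ℕ} :
    gv a b c ≤ m ↔ a ≤ m 0 ∧ b ≤ m 1 ∧ c ≤ m 2 := by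
  rw [Finsupp.le_def]
  constructor
  · intro h
    exact ⟨by simpa using h 0, by simpa using h 1, by simpa using h 2⟩
  · rintro ⟨h0, h1, h2⟩ j
    fin_cases j <;> simpa

lemma single_add_apply0 (m : Fin 3 →₀ ℕ) : (Finsupp.single (0 : Fin 3) 1 + m : Fin 3 →₀ ℕ) 0 = m 0 + 1 := by
  simp [Finsupp.single_apply, Nat.add_comm]
lemma single_add_apply1 (m : Fin 3 →₀ ℕ) : (Finsupp.single (0 : Fin 3) 1 + m : Fin 3 →₀ ℕ) 1 = m 1 := by
  simp [Finsupp.single_apply]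
lemma single_add_apply2 (m : Fin 3 →₀ ℕ) : (Finsupp.single (0 : Fin 3) 1 + m : Fin 3 →₀ ℕ) 2 = m 2 := by
  simp [Finsupp.single_apply]

lemma weight3 (m : Fin 3 →₀ ℕ) : (Finsupp.weight 1) m = m 0 + m 1 + m 2 := by
  rw [show (Finsupp.weight 1) m = Finsupp.degree m from
    (congrArg (· m) Finsupp.degree_eq_weight_one).symm, Finsupp.degree_apply]
  rw [Finset.sum_subset (Finset.subset_univ m.support)]
  · exact Fin.sum_univ_three m
  · intro x _ hx
    simpa using hx

lemma homog_support {k : Type*} [Field k] {p : MvPolynomial (Fin 3) k} {n : ℕ}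
    (hp : p.IsHomogeneous n) {m : Fin 3 →₀ ℕ} (hm : coeff m p ≠ 0) :
    m 0 + m 1 + m 2 = n := by
  rw [← weight3]; exact hp hm

variable (k : Type*) [Field k]

lemma A_eq (e i : ℕ) : A k e i = monomial (gv 0 i (e - i)) (1 : k) := by
  rw [A, X_pow_eq_monomial, X_pow_eq_monomial, monomial_mul, one_mul, gv]
  simp

lemma A_homog {e i : ℕ} (hi : i ≤ e) : (A k e i).IsHomogeneous e := by
  have := (isHomogeneous_X_pow (R := k) (1 : Fin 3) i).mul (isHomogeneous_X_pow (R := k) (2 : Fin 3) (e - i))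
  rw [show i + (e - i) = e by omega] at this
  rw [A]
  exact this

end HQAux
namespace HQAux

variable (k : Type*) [Field k]

lemma B_eq (e i : ℕ) : B k e i = monomial (gv 0 i (e + 1 - i)) (1 : k) := by
  rw [B, X_pow_eq_monomial, X_pow_eq_monomial, monomial_mul, one_mul, gv]
  simp

lemma C_eq (e i : ℕ) : C k e i = monomial (gv 0 i (e + 2 - i)) (1 : k) := by
  rw [_root_.C, X_pow_eq_monomial, X_pow_eq_monomial, monomial_mul, one_mul, gv]
  simp

lemma AX2_eq (e i : ℕ) : A k e i * X 2 = monomial (gv 0 i (e - i + 1)) (1 : k) := by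
  rw [A_eq, show (X 2 : MvPolynomial (Fin 3) k) = monomial (Finsupp.single 2 1) 1 by
    rw [← X_pow_eq_monomial, pow_one], monomial_mul, one_mul, gv, gv]
  rw [show (Finsupp.single (0:Fin 3) 0 + Finsupp.single 1 i + Finsupp.single 2 (e - i)) +
      Finsupp.single 2 1 = Finsupp.single (0:Fin 3) 0 + Finsupp.single 1 i +
      (Finsupp.single 2 (e - i) + Finsupp.single 2 1) by abel]
  rw [Finsupp.single_add]

lemma AX0_eq (e i : ℕ) : A k e i * X 0 = monomial (gv 1 i (e - i)) (1 : k) := by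
  rw [A_eq, show (X 0 : MvPolynomial (Fin 3) k) = monomial (Finsupp.single 0 1) 1 by
    rw [← X_pow_eq_monomial, pow_one], monomial_mul, one_mul, gv, gv]
  congr 1
  rw [Finsupp.single_zero]
  abel

lemma X0_mul_A (e i : ℕ) : X 0 * A k e i = monomial (gv 1 i (e - i)) (1 : k) := by
  rw [mul_comm, AX0_eq]

lemma X2_mul_A (e i : ℕ) : X 2 * A k e i = monomial (gv 0 i (e - i + 1)) (1 : k) := by
  rw [mul_comm, AX2_eq]

lemma X1_mul_A (e i : ℕ) : X 1 * A k e i = monomial (gv 0 (i + 1) (e - i)) (1 : k) := by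
  rw [A_eq, show (X 1 : MvPolynomial (Fin 3) k) = monomial (Finsupp.single 1 1) 1 by
    rw [← X_pow_eq_monomial, pow_one], monomial_mul, one_mul, gv, gv]
  rw [Finsupp.single_zero, Finsupp.single_add]
  abel

/-- The generating exponents of the ideal `I`. -/
def GI (e d r s : ℕ) : Set (Fin 3 →₀ ℕ) :=
  (fun i => gv 0 i (e - i)) '' Set.Icc (r - s) e ∪
  (fun i => gv 0 i (e - i + 1)) '' Set.Icc (d - s) (r - s - 1) ∪
  (fun i => gv 1 i (e - i)) '' Set.Icc (d - s) (r - s - 1) ∪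
  (fun i => gv 0 i (e + 1 - i)) '' Set.Icc (r - d) (d - s - 1) ∪
  (fun i => gv 0 i (e + 2 - i)) '' Set.Iic (r - d - 1)

lemma If_eq (e d r s : ℕ) :
    If k e d r s = Ideal.span ((fun m => monomial m (1 : k)) '' GI e d r s) := by
  rw [If, GI]
  congr 1
  simp only [Set.image_union, Set.image_image]
  congr 1
  · congr 1
    · congr 1
      · congr 1
        · exact Set.image_congr' (fun i => A_eq k e i)
        · exact Set.image_congr' (fun i => AX2_eq k e i)
      · exact Set.image_congr' (fun i => AX0_eq k e i)
    · exact Set.image_congr' (fun i => B_eq k e i)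
  · exact Set.image_congr' (fun i => C_eq k e i)

lemma mem_If_iff (e d r s : ℕ) {p : MvPolynomial (Fin 3) k} :
    p ∈ If k e d r s ↔ ∀ m ∈ p.support, ∃ g ∈ GI e d r s, g ≤ m := by
  rw [If_eq, mem_ideal_span_monomial_image]

lemma mem_GI_iff (e d r s : ℕ) {g : Fin 3 →₀ ℕ} :
    g ∈ GI e d r s ↔
      (∃ i, (r - s ≤ i ∧ i ≤ e) ∧ g = gv 0 i (e - i)) ∨
      (∃ i, (d - s ≤ i ∧ i ≤ r - s - 1) ∧ g = gv 0 i (e - i + 1)) ∨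
      (∃ i, (d - s ≤ i ∧ i ≤ r - s - 1) ∧ g = gv 1 i (e - i)) ∨
      (∃ i, (r - d ≤ i ∧ i ≤ d - s - 1) ∧ g = gv 0 i (e + 1 - i)) ∨
      (∃ i, i ≤ r - d - 1 ∧ g = gv 0 i (e + 2 - i)) := by
  simp only [GI, Set.mem_union, Set.mem_image, Set.mem_Icc, Set.mem_Iic, eq_comm, or_assoc]

end HQAux
namespace HQAux

variable (k : Type*) [Field k]

lemma not_dvd_extra {e d r s : ℕ} (h1 : s < d) (h2 : d < r) (he : r ≤ s + e)
    {i : ℕ} (hi1 : d - s ≤ i) (hi2 : i ≤ r - s - 1) :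
    ¬ ∃ g ∈ GI e d r s, g ≤ gv 0 i (e - i) := by
  rintro ⟨g, hg, hle⟩
  rw [mem_GI_iff] at hg
  rcases hg with ⟨j, ⟨hj1, hj2⟩, rfl⟩ | ⟨j, ⟨hj1, hj2⟩, rfl⟩ | ⟨j, ⟨hj1, hj2⟩, rfl⟩ |
    ⟨j, ⟨hj1, hj2⟩, rfl⟩ | ⟨j, hj1, rfl⟩ <;>
    rw [gv_le_iff] at hle <;>
    simp only [gv_apply0, gv_apply1, gv_apply2] at hle <;> omega

lemma coeff_extra_eq_zero {e d r s : ℕ} (h1 : s < d) (h2 : d < r) (he : r ≤ s + e)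
    {i : ℕ} (hi1 : d - s ≤ i) (hi2 : i ≤ r - s - 1)
    {p : MvPolynomial (Fin 3) k} (hp : p ∈ If k e d r s) :
    coeff (gv 0 i (e - i)) p = 0 := by
  by_contra h
  obtain ⟨g, hg, hle⟩ := (mem_If_iff k e d r s).1 hp _ (mem_support_iff.2 h)
  exact not_dvd_extra h1 h2 he hi1 hi2 ⟨g, hg, hle⟩

lemma A_mem_If {e d r s : ℕ} {i : ℕ} (hi1 : r - s ≤ i) (hi2 : i ≤ e) :
    A k e i ∈ If k e d r s := by
  rw [mem_If_iff]
  classical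
  intro m hm
  rw [A_eq, support_monomial, if_neg one_ne_zero, Finset.mem_singleton] at hm
  subst hm
  exact ⟨gv 0 i (e - i), (mem_GI_iff e d r s).2 (Or.inl ⟨i, ⟨hi1, hi2⟩, rfl⟩), le_rfl⟩

lemma B_mem_If {e d r s : ℕ} {i : ℕ} (hi1 : r - d ≤ i) (hi2 : i ≤ d - s - 1) :
    B k e i ∈ If k e d r s := by
  rw [mem_If_iff]
  classical
  intro m hm
  rw [B_eq, support_monomial, if_neg one_ne_zero, Finset.mem_singleton] at hm
  subst hm
  exact ⟨gv 0 i (e + 1 - i), (mem_GI_iff e d r s).2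
    (Or.inr (Or.inr (Or.inr (Or.inl ⟨i, ⟨hi1, hi2⟩, rfl⟩)))), le_rfl⟩

lemma C_mem_If {e d r s : ℕ} {i : ℕ} (hi2 : i ≤ r - d - 1) :
    C k e i ∈ If k e d r s := by
  rw [mem_If_iff]
  classical
  intro m hm
  rw [C_eq, support_monomial, if_neg one_ne_zero, Finset.mem_singleton] at hm
  subst hm
  exact ⟨gv 0 i (e + 2 - i), (mem_GI_iff e d r s).2
    (Or.inr (Or.inr (Or.inr (Or.inr ⟨i, hi2, rfl⟩)))), le_rfl⟩

lemma X_mul_A_mem {e d r s : ℕ} (h1 : s < d) (h2 : d < r) (he : r ≤ s + e)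
    {i : ℕ} (hi1 : d - s ≤ i) (hi2 : i ≤ r - s - 1) (j : Fin 3) :
    X j * A k e i ∈ If k e d r s := by
  classical
  have m0 : X 0 * A k e i ∈ If k e d r s := by
    rw [mem_If_iff]
    intro m hm
    rw [X0_mul_A, support_monomial, if_neg one_ne_zero, Finset.mem_singleton] at hm
    subst hm
    exact ⟨gv 1 i (e - i), (mem_GI_iff e d r s).2
      (Or.inr (Or.inr (Or.inl ⟨i, ⟨hi1, hi2⟩, rfl⟩))), le_rfl⟩
  have m1 : X 1 * A k e i ∈ If k e d r s := by
    rw [mem_If_iff]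
    intro m hm
    rw [X1_mul_A, support_monomial, if_neg one_ne_zero, Finset.mem_singleton] at hm
    subst hm
    by_cases h : i + 1 ≤ r - s - 1
    · refine ⟨gv 0 (i + 1) (e - (i + 1) + 1), (mem_GI_iff e d r s).2
        (Or.inr (Or.inl ⟨i + 1, ⟨by omega, h⟩, rfl⟩)), ?_⟩
      rw [gv_le_iff]
      simp only [gv_apply0, gv_apply1, gv_apply2]
      omega
    · refine ⟨gv 0 (r - s) (e - (r - s)), (mem_GI_iff e d r s).2
        (Or.inl ⟨r - s, ⟨le_rfl, by omega⟩, rfl⟩), ?_⟩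
      rw [gv_le_iff]
      simp only [gv_apply0, gv_apply1, gv_apply2]
      omega
  have m2 : X 2 * A k e i ∈ If k e d r s := by
    rw [mem_If_iff]
    intro m hm
    rw [X2_mul_A, support_monomial, if_neg one_ne_zero, Finset.mem_singleton] at hm
    subst hm
    exact ⟨gv 0 i (e - i + 1), (mem_GI_iff e d r s).2
      (Or.inr (Or.inl ⟨i, ⟨hi1, hi2⟩, rfl⟩)), le_rfl⟩
  fin_cases j
  · exact m0
  · exact m1
  · exact m2

lemma A_mem_Jf {e d r s : ℕ} {i : ℕ} (hi1 : d - s ≤ i) (hi2 : i ≤ e) :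
    A k e i ∈ Jf k e d r s :=
  Ideal.subset_span (Or.inl (Or.inl ⟨i, Set.mem_Icc.2 ⟨hi1, hi2⟩, rfl⟩))

lemma X_mul_J_mem {e d r s : ℕ} (h1 : s < d) (h2 : d < r) (he : r ≤ s + e)
    (j : Fin 3) {f : MvPolynomial (Fin 3) k} (hf : f ∈ Jf k e d r s) :
    X j * f ∈ If k e d r s := by
  refine Submodule.span_induction ?_ ?_ ?_ ?_ hf
  · rintro x ((⟨i, hi, rfl⟩ | ⟨i, hi, rfl⟩) | ⟨i, hi, rfl⟩)
    · rw [Set.mem_Icc] at hi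
      by_cases h : i ≤ r - s - 1
      · exact X_mul_A_mem k h1 h2 he hi.1 h j
      · exact Ideal.mul_mem_left _ _ (A_mem_If k (by omega) hi.2)
    · rw [Set.mem_Icc] at hi
      exact Ideal.mul_mem_left _ _ (B_mem_If k hi.1 hi.2)
    · rw [Set.mem_Iic] at hi
      exact Ideal.mul_mem_left _ _ (C_mem_If k hi)
  · simp
  · intro x y _ _ hx hy
    rw [mul_add]
    exact Ideal.add_mem _ hx hy
  · intro a x _ hx
    rw [smul_eq_mul, show X j * (a * x) = a * (X j * x) by ring]
    exact Ideal.mul_mem_left _ _ hx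

lemma mem_span_X_of_constantCoeff {q : MvPolynomial (Fin 3) k} (hq : constantCoeff q = 0) :
    q ∈ Ideal.span (MvPolynomial.X '' (Set.univ : Set (Fin 3)) :
      Set (MvPolynomial (Fin 3) k)) := by
  rw [mem_ideal_span_X_image]
  intro m hm
  by_contra h
  push_neg at h
  have hm0 : m = 0 := by
    ext j
    simpa using h j (Set.mem_univ j)
  rw [mem_support_iff, hm0] at hm
  rw [constantCoeff_eq] at hq
  exact hm hq

lemma q_mul_J_mem {e d r s : ℕ} (h1 : s < d) (h2 : d < r) (he : r ≤ s + e)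
    {q f : MvPolynomial (Fin 3) k} (hq : constantCoeff q = 0) (hf : f ∈ Jf k e d r s) :
    q * f ∈ If k e d r s := by
  refine Submodule.span_induction ?_ ?_ ?_ ?_ (mem_span_X_of_constantCoeff k hq)
  · rintro x ⟨j, -, rfl⟩
    exact X_mul_J_mem k h1 h2 he j hf
  · simp
  · intro x y _ _ hx hy
    rw [add_mul]
    exact Ideal.add_mem _ hx hy
  · intro a x _ hx
    rw [smul_eq_mul, mul_assoc]
    exact Ideal.mul_mem_left _ _ hx

end HQAux
namespace HQAux

variable (k : Type*) [Field k]

/-- Decomposition of an element of `J` as an element of `I` plus a `k`-linear combination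
of the extra generators `A_i`, `d-s ≤ i ≤ r-s-1`. -/
lemma J_decomp {e d r s : ℕ} (h1 : s < d) (h2 : d < r) (he : r ≤ s + e)
    {f : MvPolynomial (Fin 3) k} (hf : f ∈ Jf k e d r s) :
    ∃ c : Fin (r - d) → k,
      f - ∑ i : Fin (r - d), MvPolynomial.C (c i) * A k e (d - s + i) ∈ If k e d r s := by
  refine Submodule.span_induction ?_ ?_ ?_ ?_ hf
  · rintro x ((⟨i, hi, rfl⟩ | ⟨i, hi, rfl⟩) | ⟨i, hi, rfl⟩)
    · rw [Set.mem_Icc] at hi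
      by_cases h : i ≤ r - s - 1
      · refine ⟨Pi.single ⟨i - (d - s), by omega⟩ 1, ?_⟩
        rw [Finset.sum_eq_single (⟨i - (d - s), by omega⟩ : Fin (r - d))]
        · rw [Pi.single_eq_same, map_one, one_mul,
            show d - s + (i - (d - s)) = i by omega, sub_self]
          exact Ideal.zero_mem _
        · intro j _ hj
          rw [Pi.single_eq_of_ne hj, map_zero, zero_mul]
        · intro h'
          exact absurd (Finset.mem_univ _) h'
      · refine ⟨0, ?_⟩
        simp only [Pi.zero_apply, map_zero, zero_mul, Finset.sum_const_zero, sub_zero]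
        exact A_mem_If k (by omega) hi.2
    · rw [Set.mem_Icc] at hi
      refine ⟨0, ?_⟩
      simp only [Pi.zero_apply, map_zero, zero_mul, Finset.sum_const_zero, sub_zero]
      exact B_mem_If k hi.1 hi.2
    · rw [Set.mem_Iic] at hi
      refine ⟨0, ?_⟩
      simp only [Pi.zero_apply, map_zero, zero_mul, Finset.sum_const_zero, sub_zero]
      exact C_mem_If k hi
  · exact ⟨0, by simp⟩
  · rintro x y _ _ ⟨cx, hx⟩ ⟨cy, hy⟩
    refine ⟨cx + cy, ?_⟩
    have hsplit : ∀ i : Fin (r - d), MvPolynomial.C ((cx + cy) i) * A k e (d - s + i) =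
        MvPolynomial.C (cx i) * A k e (d - s + i) +
        MvPolynomial.C (cy i) * A k e (d - s + i) := by
      intro i
      rw [Pi.add_apply, map_add, add_mul]
    have : x + y - ∑ i : Fin (r - d), MvPolynomial.C ((cx + cy) i) * A k e (d - s + i) =
        (x - ∑ i : Fin (r - d), MvPolynomial.C (cx i) * A k e (d - s + i)) +
        (y - ∑ i : Fin (r - d), MvPolynomial.C (cy i) * A k e (d - s + i)) := by
      rw [Finset.sum_congr rfl fun i _ => hsplit i, Finset.sum_add_distrib]
      ring
    rw [this]
    exact Ideal.add_mem _ hx hy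
  · rintro p x _ ⟨c, hc⟩
    refine ⟨fun i => constantCoeff p * c i, ?_⟩
    rw [smul_eq_mul]
    set T := ∑ i : Fin (r - d), MvPolynomial.C (c i) * A k e (d - s + i) with hT
    have e1 : ∑ i : Fin (r - d), MvPolynomial.C (constantCoeff p * c i) * A k e (d - s + i) =
        MvPolynomial.C (constantCoeff p) * T := by
      rw [hT, Finset.mul_sum]
      exact Finset.sum_congr rfl fun i _ => by rw [map_mul]; ring
    have e2 : p * x - MvPolynomial.C (constantCoeff p) * T =
        p * (x - T) + (p - MvPolynomial.C (constantCoeff p)) * T := by ring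
    rw [e1, e2]
    refine Ideal.add_mem _ (Ideal.mul_mem_left _ _ hc) ?_
    rw [hT, Finset.mul_sum]
    refine Ideal.sum_mem _ fun i _ => ?_
    rw [show (p - MvPolynomial.C (constantCoeff p)) * (MvPolynomial.C (c i) * A k e (d - s + i)) =
      MvPolynomial.C (c i) * ((p - MvPolynomial.C (constantCoeff p)) * A k e (d - s + i)) by ring]
    refine Ideal.mul_mem_left _ _ ?_
    have hcc : constantCoeff (p - MvPolynomial.C (constantCoeff p)) = 0 := by
      rw [map_sub, constantCoeff_C, sub_self]
    exact q_mul_J_mem k h1 h2 he hcc (A_mem_Jf k (by omega) (by omega))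

/-- Coefficient extraction from a combination of the extra `A_i`. -/
lemma comb_coeff {e d r s : ℕ} (h1 : s < d) (h2 : d < r)
    (g : Fin (r - d) → k) (i : Fin (r - d)) :
    coeff (gv 0 (d - s + i) (e - (d - s + i)))
      (∑ j : Fin (r - d), MvPolynomial.C (g j) * A k e (d - s + j)) = g i := by
  classical
  rw [coeff_sum, Finset.sum_eq_single i]
  · rw [A_eq, C_mul_monomial, mul_one, coeff_monomial, if_pos rfl]
  · intro j _ hj
    rw [A_eq, C_mul_monomial, mul_one, coeff_monomial, if_neg]
    intro hgv
    have := congrArg (fun m : Fin 3 →₀ ℕ => m 1) hgv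
    simp only [gv_apply1] at this
    exact hj (by ext; omega)
  · intro h'
    exact absurd (Finset.mem_univ _) h'

/-- Classification of monomials in the support of a degree-`e` homogeneous polynomial `p`
with `X 0 * p ∈ I`: each is divisible by a generator of `I` or is one of the extra `A_i`. -/
lemma support_classify {e d r s : ℕ} (h1 : s < d) (h2 : d < r) (he : r ≤ s + e)
    {p : MvPolynomial (Fin 3) k} (hp : p.IsHomogeneous e)
    (hX0 : X 0 * p ∈ If k e d r s) {m : Fin 3 →₀ ℕ} (hm : m ∈ p.support) :
    (∃ g ∈ GI e d r s, g ≤ m) ∨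
      ∃ i : Fin (r - d), m = gv 0 (d - s + i) (e - (d - s + i)) := by
  have hdeg : m 0 + m 1 + m 2 = e := homog_support hp (mem_support_iff.1 hm)
  have hm' : Finsupp.single (0 : Fin 3) 1 + m ∈ (X 0 * p).support := by
    rw [support_X_mul]
    exact Finset.mem_map_of_mem _ hm
  obtain ⟨g, hg, hle⟩ := (mem_If_iff k e d r s).1 hX0 _ hm'
  rw [Finsupp.le_def] at hle
  have h0 : g 0 ≤ m 0 + 1 := by
    have := hle 0
    rwa [single_add_apply0] at this
  have hh1 : g 1 ≤ m 1 := by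
    have := hle 1
    rwa [single_add_apply1] at this
  have hh2 : g 2 ≤ m 2 := by
    have := hle 2
    rwa [single_add_apply2] at this
  rw [mem_GI_iff] at hg
  rcases hg with ⟨j, ⟨hj1, hj2⟩, rfl⟩ | ⟨j, ⟨hj1, hj2⟩, rfl⟩ | ⟨j, ⟨hj1, hj2⟩, rfl⟩ |
      ⟨j, ⟨hj1, hj2⟩, rfl⟩ | ⟨j, hj1, rfl⟩ <;>
    simp only [gv_apply0, gv_apply1, gv_apply2] at h0 hh1 hh2
  · -- gA_j, r-s ≤ j ≤ e : divides m itself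
    refine Or.inl ⟨gv 0 j (e - j), (mem_GI_iff e d r s).2 (Or.inl ⟨j, ⟨hj1, hj2⟩, rfl⟩), ?_⟩
    rw [gv_le_iff]
    refine ⟨by omega, by omega, by omega⟩
  · -- gA2_j : impossible
    exact absurd hdeg (by omega)
  · -- gA0_j, d-s ≤ j ≤ r-s-1
    by_cases hm0 : m 0 = 0
    · have hlt : j - (d - s) < r - d := by omega
      refine Or.inr ⟨⟨j - (d - s), hlt⟩, ?_⟩
      have hv : ((⟨j - (d - s), hlt⟩ : Fin (r - d)) : ℕ) = j - (d - s) := rfl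
      rw [hv]
      have e2 : m 1 = d - s + (j - (d - s)) := by omega
      have e3 : m 2 = e - (d - s + (j - (d - s))) := by omega
      calc m = gv (m 0) (m 1) (m 2) := (gv_eta m).symm
        _ = _ := by rw [hm0, e2, e3]
    · refine Or.inl ⟨gv 1 j (e - j), (mem_GI_iff e d r s).2
        (Or.inr (Or.inr (Or.inl ⟨j, ⟨hj1, hj2⟩, rfl⟩))), ?_⟩
      rw [gv_le_iff]
      refine ⟨by omega, by omega, by omega⟩
  · -- gB_j : impossible
    exact absurd hdeg (by omega)
  · -- gC_j : impossible
    exact absurd hdeg (by omega)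

end HQAux
set_option synthInstance.maxHeartbeats 1000000
set_option maxHeartbeats 1000000

namespace HQAux

variable (k : Type*) [Field k]

lemma smul_mk {I : Ideal (MvPolynomial (Fin 3) k)} (p w : MvPolynomial (Fin 3) k) :
    p • (Ideal.Quotient.mk I w) = Ideal.Quotient.mk I (p * w) := rfl

lemma k_smul_mk {I : Ideal (MvPolynomial (Fin 3) k)} (c : k) (w : MvPolynomial (Fin 3) k) :
    c • (Ideal.Quotient.mk I w) = Ideal.Quotient.mk I (MvPolynomial.C c * w) := by
  rw [← smul_mk, ← MvPolynomial.algebraMap_eq, algebraMap_smul]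

/-- Multiplication by a polynomial on an element of the quotient killed by all the variables
is multiplication by the constant coefficient. -/
lemma socle_smul {I : Ideal (MvPolynomial (Fin 3) k)} {z : MvPolynomial (Fin 3) k ⧸ I}
    (hz : ∀ j : Fin 3, (X j : MvPolynomial (Fin 3) k) • z = 0) (p : MvPolynomial (Fin 3) k) :
    p • z = constantCoeff p • z := by
  have hq : (p - MvPolynomial.C (constantCoeff p)) • z = 0 := by
    have hmem : p - MvPolynomial.C (constantCoeff p) ∈ Ideal.span
        (MvPolynomial.X '' (Set.univ : Set (Fin 3)) : Set (MvPolynomial (Fin 3) k)) :=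
      mem_span_X_of_constantCoeff k (by rw [map_sub, constantCoeff_C, sub_self])
    refine Submodule.span_induction ?_ ?_ ?_ ?_ hmem
    · rintro x ⟨j, -, rfl⟩
      exact hz j
    · rw [zero_smul]
    · intro x y _ _ hx hy
      rw [add_smul, hx, hy, add_zero]
    · intro a x _ hx
      rw [smul_eq_mul, mul_smul, hx, smul_zero]
  have : p • z = (MvPolynomial.C (constantCoeff p) + (p - MvPolynomial.C (constantCoeff p))) • z := by
    ring_nf
  rw [this, add_smul, hq, add_zero, ← MvPolynomial.algebraMap_eq, algebraMap_smul]

/-- The degree-`e` part of the socle of `S/I`, as a `k`-submodule. -/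
noncomputable def socE (e d r s : ℕ) :
    Submodule k (MvPolynomial (Fin 3) k ⧸ If k e d r s) where
  carrier := {z | z ∈ quotPiece k (If k e d r s) e ∧
    ∀ j : Fin 3, (X j : MvPolynomial (Fin 3) k) • z = 0}
  add_mem' := fun ha hb =>
    ⟨Submodule.add_mem _ ha.1 hb.1, fun j => by rw [smul_add, ha.2 j, hb.2 j, add_zero]⟩
  zero_mem' := ⟨Submodule.zero_mem _, fun j => smul_zero _⟩
  smul_mem' := fun c z hz =>
    ⟨Submodule.smul_mem _ c hz.1, fun j => by rw [smul_comm, hz.2 j, smul_zero]⟩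

lemma mem_socE_iff {e d r s : ℕ} {z : MvPolynomial (Fin 3) k ⧸ If k e d r s} :
    z ∈ socE k e d r s ↔ z ∈ quotPiece k (If k e d r s) e ∧
      ∀ j : Fin 3, (X j : MvPolynomial (Fin 3) k) • z = 0 := Iff.rfl

/-- The images of the extra generators `A_{d-s+i}` in `S/I`. -/
noncomputable def vE (e d r s : ℕ) (i : Fin (r - d)) :
    MvPolynomial (Fin 3) k ⧸ If k e d r s :=
  Ideal.Quotient.mk (If k e d r s) (A k e (d - s + i))

lemma vE_mem_socE {e d r s : ℕ} (h1 : s < d) (h2 : d < r) (he : r ≤ s + e) (i : Fin (r - d)) :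
    vE k e d r s i ∈ socE k e d r s := by
  constructor
  · exact ⟨A k e (d - s + i), (mem_homogeneousSubmodule _ _).2 (A_homog k (by omega)), rfl⟩
  · intro j
    rw [vE, smul_mk, Ideal.Quotient.eq_zero_iff_mem]
    exact X_mul_A_mem k h1 h2 he (by omega) (by omega) j

lemma socE_le_span {e d r s : ℕ} (h1 : s < d) (h2 : d < r) (he : r ≤ s + e) :
    socE k e d r s ≤ Submodule.span k (Set.range (vE k e d r s)) := by
  rintro z ⟨hz1, hz2⟩
  obtain ⟨p, hp, rfl⟩ := hz1
  simp only [AlgHom.toLinearMap_apply, Ideal.Quotient.mkₐ_eq_mk] at hz2 ⊢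
  have hp : p.IsHomogeneous e := hp
  have hX0 : X 0 * p ∈ If k e d r s := by
    have := hz2 0
    rwa [smul_mk, Ideal.Quotient.eq_zero_iff_mem] at this
  classical
  set q := p - ∑ i : Fin (r - d),
    MvPolynomial.C (coeff (gv 0 (d - s + i) (e - (d - s + i))) p) * A k e (d - s + i) with hq
  have hqI : q ∈ If k e d r s := by
    rw [mem_If_iff]
    intro m hm
    have hcq : coeff m q ≠ 0 := mem_support_iff.1 hm
    by_cases hex : ∃ i : Fin (r - d), m = gv 0 (d - s + i) (e - (d - s + i))
    · exfalso
      obtain ⟨i, rfl⟩ := hex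
      rw [hq, coeff_sub, comb_coeff k h1 h2, sub_self] at hcq
      exact hcq rfl
    · have hmp : m ∈ p.support := by
        rw [mem_support_iff]
        intro hc
        apply hcq
        rw [hq, coeff_sub, hc, coeff_sum, zero_sub, neg_eq_zero]
        refine Finset.sum_eq_zero fun i _ => ?_
        rw [A_eq, C_mul_monomial, mul_one, coeff_monomial, if_neg]
        intro hgv
        exact hex ⟨i, hgv.symm⟩
      rcases support_classify k h1 h2 he hp hX0 hmp with h | h
      · exact h
      · exact absurd h hex
  have hrw : Ideal.Quotient.mk (If k e d r s) p =
      ∑ i : Fin (r - d), (coeff (gv 0 (d - s + i) (e - (d - s + i))) p) • vE k e d r s i := by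
    have : p = q + ∑ i : Fin (r - d),
        MvPolynomial.C (coeff (gv 0 (d - s + i) (e - (d - s + i))) p) * A k e (d - s + i) := by
      rw [hq]; ring
    conv_lhs => rw [this]
    rw [map_add, Ideal.Quotient.eq_zero_iff_mem.2 hqI, zero_add,
      map_sum (Ideal.Quotient.mk (If k e d r s)) _ Finset.univ]
    exact Finset.sum_congr rfl fun i _ => by rw [vE, k_smul_mk]
  rw [hrw]
  exact Submodule.sum_mem _ fun i _ =>
    Submodule.smul_mem _ _ (Submodule.subset_span (Set.mem_range_self i))

lemma socE_eq_span {e d r s : ℕ} (h1 : s < d) (h2 : d < r) (he : r ≤ s + e) :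
    socE k e d r s = Submodule.span k (Set.range (vE k e d r s)) := by
  refine le_antisymm (socE_le_span k h1 h2 he) ?_
  rw [Submodule.span_le]
  rintro z ⟨i, rfl⟩
  exact vE_mem_socE k h1 h2 he i

lemma vE_linearIndependent {e d r s : ℕ} (h1 : s < d) (h2 : d < r) (he : r ≤ s + e) :
    LinearIndependent k (vE k e d r s) := by
  rw [Fintype.linearIndependent_iff]
  intro g hg i
  have hmk : Ideal.Quotient.mk (If k e d r s)
      (∑ j : Fin (r - d), MvPolynomial.C (g j) * A k e (d - s + j)) = 0 := by
    rw [map_sum (Ideal.Quotient.mk (If k e d r s)) _ Finset.univ, ← hg]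
    exact Finset.sum_congr rfl fun j _ => by rw [vE, k_smul_mk]
  rw [Ideal.Quotient.eq_zero_iff_mem] at hmk
  have := coeff_extra_eq_zero k h1 h2 he (i := d - s + i)
    (by omega) (by omega) hmk
  rwa [comb_coeff k h1 h2] at this

lemma finrank_socE {e d r s : ℕ} (h1 : s < d) (h2 : d < r) (he : r ≤ s + e) :
    Module.finrank k (socE k e d r s) = r - d := by
  rw [socE_eq_span k h1 h2 he, finrank_span_eq_card (vE_linearIndependent k h1 h2 he),
    Fintype.card_fin]

end HQAux
namespace HQAux

variable (k : Type*) [Field k]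

lemma coeff_mul_extra {e d r s : ℕ} (h1 : s < d) (h2 : d < r) (he : r ≤ s + e)
    (p : MvPolynomial (Fin 3) k) {f : MvPolynomial (Fin 3) k} (hf : f ∈ Jf k e d r s)
    {i : ℕ} (hi1 : d - s ≤ i) (hi2 : i ≤ r - s - 1) :
    coeff (gv 0 i (e - i)) (p * f) = constantCoeff p * coeff (gv 0 i (e - i)) f := by
  have hq : (p - MvPolynomial.C (constantCoeff p)) * f ∈ If k e d r s :=
    q_mul_J_mem k h1 h2 he (by rw [map_sub, constantCoeff_C, sub_self]) hf
  have h0 := coeff_extra_eq_zero k h1 h2 he hi1 hi2 hq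
  rw [sub_mul, coeff_sub, coeff_C_mul] at h0
  exact sub_eq_zero.mp h0

/-- The elements `A_{d-s+i}` as elements of the submodule `J`. -/
noncomputable def aJ {e d r s : ℕ} (h1 : s < d) (h2 : d < r) (he : r ≤ s + e)
    (i : Fin (r - d)) : ↥(Jf k e d r s) :=
  ⟨A k e (d - s + i), A_mem_Jf k (by omega) (by omega)⟩

/-- The evaluation map `Hom₀(J/I, S/I) → (socle)^(r-d)`. -/
noncomputable def EMap {e d r s : ℕ} (h1 : s < d) (h2 : d < r) (he : r ≤ s + e) :
    ↥(HomQuot0 k (Jf k e d r s) (If k e d r s)) →ₗ[k]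
      (Fin (r - d) → socE k e d r s) where
  toFun φ := fun i => ⟨φ.1 (Submodule.Quotient.mk (aJ k h1 h2 he i)), by
    constructor
    · exact φ.2 e (aJ k h1 h2 he i) (A_homog k (by omega))
    · intro j
      rw [← map_smul, ← Submodule.Quotient.mk_smul]
      have hz : Submodule.Quotient.mk (p := Submodule.comap
          (Submodule.subtype (Jf k e d r s)) (If k e d r s))
          ((X j : MvPolynomial (Fin 3) k) • aJ k h1 h2 he i) = 0 := by
        rw [Submodule.Quotient.mk_eq_zero]
        rw [Submodule.mem_comap]
        exact X_mul_A_mem k h1 h2 he (by omega) (by omega) j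
      rw [hz, map_zero]⟩
  map_add' φ ψ := by
    funext i
    apply Subtype.ext
    simp
  map_smul' c φ := by
    funext i
    apply Subtype.ext
    simp

lemma EMap_injective {e d r s : ℕ} (h1 : s < d) (h2 : d < r) (he : r ≤ s + e) :
    Function.Injective (EMap k h1 h2 he) := by
  intro φ ψ h
  have hcomp : ∀ i : Fin (r - d),
      φ.1 (Submodule.Quotient.mk (aJ k h1 h2 he i)) =
      ψ.1 (Submodule.Quotient.mk (aJ k h1 h2 he i)) := by
    intro i
    have := congrFun h i
    exact Subtype.ext_iff.1 this
  apply Subtype.ext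
  apply LinearMap.ext
  intro z
  obtain ⟨f, rfl⟩ := Submodule.Quotient.mk_surjective _ z
  obtain ⟨c, hc⟩ := J_decomp k h1 h2 he f.2
  have hkey : ∀ χ : ↥(HomQuot0 k (Jf k e d r s) (If k e d r s)),
      χ.1 (Submodule.Quotient.mk f) = ∑ i : Fin (r - d),
        (MvPolynomial.C (c i) : MvPolynomial (Fin 3) k) •
          χ.1 (Submodule.Quotient.mk (aJ k h1 h2 he i)) := by
    intro χ
    have hmkeq : (Submodule.Quotient.mk f : ↥(Jf k e d r s) ⧸ Submodule.comap
        (Submodule.subtype (Jf k e d r s)) (If k e d r s)) =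
        Submodule.Quotient.mk (∑ i : Fin (r - d),
          (MvPolynomial.C (c i) : MvPolynomial (Fin 3) k) • aJ k h1 h2 he i) := by
      rw [Submodule.Quotient.eq, Submodule.mem_comap]
      have hval : ((f - ∑ i : Fin (r - d), (MvPolynomial.C (c i) : MvPolynomial (Fin 3) k) • aJ k h1 h2 he i :
          ↥(Jf k e d r s)) : MvPolynomial (Fin 3) k) =
          f.1 - ∑ i : Fin (r - d), MvPolynomial.C (c i) * A k e (d - s + i) := by
        push_cast
        rfl
      rw [Submodule.subtype_apply, hval]
      exact hc
    rw [hmkeq, ← Submodule.mkQ_apply, map_sum, map_sum]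
    exact Finset.sum_congr rfl fun i _ => by
      rw [map_smul, map_smul, Submodule.mkQ_apply]
  rw [hkey φ, hkey ψ]
  exact Finset.sum_congr rfl fun i _ => by rw [hcomp i]

lemma aJ_coe {e d r s : ℕ} (h1 : s < d) (h2 : d < r) (he : r ≤ s + e) (i : Fin (r - d)) :
    ((aJ k h1 h2 he i : ↥(Jf k e d r s)) : MvPolynomial (Fin 3) k) = A k e (d - s + i) := rfl

/-- The linear map `J → S/I` determined by a tuple of socle elements. -/
noncomputable def PhiMap {e d r s : ℕ} (h1 : s < d) (h2 : d < r) (he : r ≤ s + e)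
    (y : Fin (r - d) → socE k e d r s) :
    ↥(Jf k e d r s) →ₗ[MvPolynomial (Fin 3) k]
      (MvPolynomial (Fin 3) k ⧸ If k e d r s) where
  toFun f := ∑ i : Fin (r - d),
    coeff (gv 0 (d - s + i) (e - (d - s + i))) (f : MvPolynomial (Fin 3) k) • (y i : _)
  map_add' f g := by
    rw [show ((f + g : ↥(Jf k e d r s)) : MvPolynomial (Fin 3) k) =
      (f : MvPolynomial (Fin 3) k) + g from rfl, ← Finset.sum_add_distrib]
    exact Finset.sum_congr rfl fun i _ => by rw [coeff_add, add_smul]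
  map_smul' p f := by
    dsimp only [RingHom.id_apply]
    have hcoe : ((p • f : ↥(Jf k e d r s)) : MvPolynomial (Fin 3) k) =
        p * (f : MvPolynomial (Fin 3) k) := rfl
    have hz : ∀ j : Fin 3, (X j : MvPolynomial (Fin 3) k) • (∑ i : Fin (r - d),
        coeff (gv 0 (d - s + i) (e - (d - s + i))) (f : MvPolynomial (Fin 3) k) •
          (y i : MvPolynomial (Fin 3) k ⧸ If k e d r s)) = 0 := by
      intro j
      rw [Finset.smul_sum]
      refine Finset.sum_eq_zero fun i _ => ?_
      rw [smul_comm, ((mem_socE_iff k).1 (y i).2).2 j, smul_zero]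
    rw [socle_smul k hz p, Finset.smul_sum]
    refine Finset.sum_congr rfl fun i _ => ?_
    rw [hcoe, coeff_mul_extra k h1 h2 he p f.2 (by omega) (by omega), mul_smul]

lemma PhiMap_apply {e d r s : ℕ} (h1 : s < d) (h2 : d < r) (he : r ≤ s + e)
    (y : Fin (r - d) → socE k e d r s) (f : ↥(Jf k e d r s)) :
    PhiMap k h1 h2 he y f = ∑ i : Fin (r - d),
      coeff (gv 0 (d - s + i) (e - (d - s + i))) (f : MvPolynomial (Fin 3) k) •
        ((y i : MvPolynomial (Fin 3) k ⧸ If k e d r s)) := rfl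

lemma PhiMap_ker {e d r s : ℕ} (h1 : s < d) (h2 : d < r) (he : r ≤ s + e)
    (y : Fin (r - d) → socE k e d r s) :
    Submodule.comap (Submodule.subtype (Jf k e d r s)) (If k e d r s) ≤
      LinearMap.ker (PhiMap k h1 h2 he y) := by
  intro f hf
  rw [Submodule.mem_comap, Submodule.subtype_apply] at hf
  rw [LinearMap.mem_ker, PhiMap_apply]
  refine Finset.sum_eq_zero fun i _ => ?_
  rw [coeff_extra_eq_zero k h1 h2 he (by omega) (by omega) hf, zero_smul]

lemma EMap_surjective {e d r s : ℕ} (h1 : s < d) (h2 : d < r) (he : r ≤ s + e) :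
    Function.Surjective (EMap k h1 h2 he) := by
  intro y
  have hmem : Submodule.liftQ _ (PhiMap k h1 h2 he y) (PhiMap_ker k h1 h2 he y) ∈
      HomQuot0 k (Jf k e d r s) (If k e d r s) := by
    intro d' f hf
    rw [Submodule.liftQ_apply, PhiMap_apply]
    by_cases hde : d' = e
    · subst hde
      exact Submodule.sum_mem _ fun i _ =>
        Submodule.smul_mem _ _ (((mem_socE_iff k).1 (y i).2).1)
    · have hco : ∀ i : Fin (r - d),
          coeff (gv 0 (d - s + i) (e - (d - s + i))) (f : MvPolynomial (Fin 3) k) = 0 := by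
        intro i
        by_contra hc
        have hdeg := homog_support hf hc
        simp only [gv_apply0, gv_apply1, gv_apply2] at hdeg
        have hi := i.isLt
        omega
      rw [Finset.sum_eq_zero fun i _ => by rw [hco i, zero_smul]]
      exact Submodule.zero_mem _
  refine ⟨⟨Submodule.liftQ _ (PhiMap k h1 h2 he y) (PhiMap_ker k h1 h2 he y), hmem⟩, ?_⟩
  funext i
  apply Subtype.ext
  show Submodule.liftQ _ (PhiMap k h1 h2 he y) (PhiMap_ker k h1 h2 he y)
    (Submodule.Quotient.mk (aJ k h1 h2 he i)) = (y i : MvPolynomial (Fin 3) k ⧸ If k e d r s)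
  rw [Submodule.liftQ_apply, PhiMap_apply]
  classical
  rw [Finset.sum_eq_single i]
  · rw [aJ_coe, A_eq, coeff_monomial, if_pos rfl, one_smul]
  · intro j _ hj
    rw [aJ_coe, A_eq, coeff_monomial, if_neg, zero_smul]
    intro hgv
    have := congrArg (fun m : Fin 3 →₀ ℕ => m 1) hgv
    simp only [gv_apply1] at this
    exact hj (by ext; omega)
  · intro h'
    exact absurd (Finset.mem_univ _) h'

end HQAux
theorem finrank_homQuot0_eq (k : Type*) [Field k] [IsAlgClosed k]
    (e d r s : ℕ) (hs : s = (e+1).choose 2)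
    (h1 : s < d) (h2 : d < r) (h3 : r < (e+2).choose 2) (h4 : r - d ≤ d - s) :
    Module.finrank k ↥(HomQuot0 k (Jf k e d r s) (If k e d r s)) = (r - d) ^ 2 := by
  have hch : (e+2).choose 2 = (e+1) + s := by
    rw [hs, Nat.choose_succ_succ (e+1) 1, Nat.choose_one_right]
  have he : r ≤ s + e := by omega
  have hbij : Function.Bijective (HQAux.EMap k h1 h2 he) :=
    ⟨HQAux.EMap_injective k h1 h2 he, HQAux.EMap_surjective k h1 h2 he⟩
  rw [LinearEquiv.finrank_eq (LinearEquiv.ofBijective _ hbij)]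
  haveI : Module.Finite k (HQAux.socE k e d r s) := by
    rw [HQAux.socE_eq_span k h1 h2 he]
    exact FiniteDimensional.span_of_finite k (Set.finite_range _)
  rw [Module.finrank_pi_fintype k]
  rw [Finset.sum_congr rfl fun (i : Fin (r - d)) _ => HQAux.finrank_socE k h1 h2 he]
  rw [Finset.sum_const, Finset.card_univ, Fintype.card_fin, smul_eq_mul, sq]
end
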